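/- Let (X,d) be a pointed discrete metric space and m ≥ 0. The following are equivalent: (a) every Lipschitz norm-preserving function f' : A → ℝ^{m+1}, A ⊂ X, extends to a Lipschitz norm-preserving function F' : X → ℝ^{m+1}; (b) for all r,s > 0, all M > 1, and every sequence of functions f_k : A_k → S^m with A_k ⊂ An(X, r·M^{2k}, r·M^{2k+1}) and Lip(f_k) ≤ s/M^{2k} for all k ≥ 1, there exist c > 0 and functions g_k : An(X, r·M^{2k}, r·M^{2k+1}) → S^m with Lip(g_k) ≤ c/M^{2k} and g_k|_{A_k} = f_k for all k ≥ 1; (c) for all r,s > 0, all M > 1, and every sequence of functions f_k : A_k → S^m with A_k ⊂ An(X, r·M^{k}, r·M^{k+1}) and Lip(f_k) ≤ s/M^{k} for all k ≥ 1, there exist c > 0 and functions g_k : An(X, r·M^{k}, r·M^{k+1}) → S^m with Lip(g_k) ≤ c/M^{k} and g_k|_{A_k} = f_k for all k ≥ 1. -/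

import Mathlib

set_option linter.unusedVariables false
set_option maxHeartbeats 2000000

/-- A function between metric spaces is *Lipschitz* if it is `λ`-Lipschitz for some `λ ≥ 0`. -/
def LipFun {X Y : Type*} [MetricSpace X] [MetricSpace Y] (f : X → Y) : Prop :=
  ∃ lam : ℝ, 0 ≤ lam ∧ ∀ x y, dist (f x) (f y) ≤ lam * dist x y

/-- The annulus `An(X, r, s) = {x ∈ X : r ≤ |x| < s}` in a pointed metric space. -/
def Annulus {X : Type*} [MetricSpace X] (x₀ : X) (r s : ℝ) : Set X :=
  {x | r ≤ dist x x₀ ∧ dist x x₀ < s}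

namespace NPEaux

abbrev PropA {X : Type*} [MetricSpace X] (x₀ : X) (m : ℕ) : Prop :=
  ∀ (A : Set X) (f : A → EuclideanSpace ℝ (Fin (m + 1))),
    (∀ a : A, ‖f a‖ = dist (a : X) x₀) → LipFun f →
    ∃ F : X → EuclideanSpace ℝ (Fin (m + 1)),
      (∀ a : A, F (a : X) = f a) ∧ (∀ x : X, ‖F x‖ = dist x x₀) ∧ LipFun F

abbrev PropB {X : Type*} [MetricSpace X] (x₀ : X) (m : ℕ) : Prop :=
  ∀ (r s M : ℝ), 0 < r → 0 < s → 1 < M →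
    ∀ (A : ℕ → Set X),
      (∀ k : ℕ, 1 ≤ k → A k ⊆ Annulus x₀ (r * M ^ (2 * k)) (r * M ^ (2 * k + 1))) →
      ∀ f : (k : ℕ) → (A k) → Metric.sphere (0 : EuclideanSpace ℝ (Fin (m + 1))) 1,
        (∀ k : ℕ, 1 ≤ k → ∀ x y : A k,
          dist (f k x) (f k y) ≤ s / M ^ (2 * k) * dist (x : X) (y : X)) →
      ∃ c > (0 : ℝ), ∃ g : (k : ℕ) → (Annulus x₀ (r * M ^ (2 * k)) (r * M ^ (2 * k + 1))) →
          Metric.sphere (0 : EuclideanSpace ℝ (Fin (m + 1))) 1,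
        ∀ k : ℕ, 1 ≤ k →
          (∀ x y : (Annulus x₀ (r * M ^ (2 * k)) (r * M ^ (2 * k + 1))),
            dist (g k x) (g k y) ≤ c / M ^ (2 * k) * dist (x : X) (y : X)) ∧
          (∀ (x : X) (hA : x ∈ A k)
              (hAn : x ∈ Annulus x₀ (r * M ^ (2 * k)) (r * M ^ (2 * k + 1))),
            g k ⟨x, hAn⟩ = f k ⟨x, hA⟩)

abbrev PropC {X : Type*} [MetricSpace X] (x₀ : X) (m : ℕ) : Prop :=
  ∀ (r s M : ℝ), 0 < r → 0 < s → 1 < M →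
    ∀ (A : ℕ → Set X),
      (∀ k : ℕ, 1 ≤ k → A k ⊆ Annulus x₀ (r * M ^ k) (r * M ^ (k + 1))) →
      ∀ f : (k : ℕ) → (A k) → Metric.sphere (0 : EuclideanSpace ℝ (Fin (m + 1))) 1,
        (∀ k : ℕ, 1 ≤ k → ∀ x y : A k,
          dist (f k x) (f k y) ≤ s / M ^ k * dist (x : X) (y : X)) →
      ∃ c > (0 : ℝ), ∃ g : (k : ℕ) → (Annulus x₀ (r * M ^ k) (r * M ^ (k + 1))) →
          Metric.sphere (0 : EuclideanSpace ℝ (Fin (m + 1))) 1,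
        ∀ k : ℕ, 1 ≤ k →
          (∀ x y : (Annulus x₀ (r * M ^ k) (r * M ^ (k + 1))),
            dist (g k x) (g k y) ≤ c / M ^ k * dist (x : X) (y : X)) ∧
          (∀ (x : X) (hA : x ∈ A k) (hAn : x ∈ Annulus x₀ (r * M ^ k) (r * M ^ (k + 1))),
            g k ⟨x, hAn⟩ = f k ⟨x, hA⟩)

lemma fp_pos (n : ℕ) : (0:ℝ) < 4^n := by positivity

lemma fp_mono {a b : ℕ} (h : a ≤ b) : (4:ℝ)^a ≤ 4^b := pow_le_pow_right₀ (by norm_num) h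

lemma elow {ε t : ℝ} (hε : 0 < ε) {a a' : ℕ} (h : a' ≤ a) (ht : ε*4^a ≤ t) : ε*4^a' ≤ t :=
  le_trans (by have := fp_mono h; nlinarith) ht

lemma ehigh {ε t : ℝ} (hε : 0 < ε) {b b' : ℕ} (h : b ≤ b') (ht : t < ε*4^b) : t < ε*4^b' :=
  lt_of_lt_of_le ht (by have := fp_mono h; nlinarith)

lemma radform (ε : ℝ) (j l n : ℕ) (h : j + 8*l = n) :
    (ε * 4^j) * ((4:ℝ)^8)^l = ε * 4^n := by
  rw [← pow_mul, mul_assoc, ← pow_add, h]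

lemma radform0 (ε : ℝ) (l n : ℕ) (h : 8*l = n) : ε * ((4:ℝ)^8)^l = ε * 4^n := by
  rw [← pow_mul, h]

lemma sform (s ε : ℝ) (j l n : ℕ) (h : j + 8*l = n) :
    s/(ε*4^j)/((4:ℝ)^8)^l = s/(ε*4^n) := by
  rw [div_div, radform ε j l n h]

lemma sform0 (s ε : ℝ) (l n : ℕ) (h : 8*l = n) : s/ε/((4:ℝ)^8)^l = s/(ε*4^n) := by
  rw [div_div, radform0 ε l n h]

section Sph
variable {m : ℕ}

lemma sphnorm (p : Metric.sphere (0 : EuclideanSpace ℝ (Fin (m+1))) 1) :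
    ‖(p : EuclideanSpace ℝ (Fin (m+1)))‖ = 1 := mem_sphere_zero_iff_norm.mp p.2

lemma sphdist (p q : Metric.sphere (0 : EuclideanSpace ℝ (Fin (m+1))) 1) :
    dist p q = ‖(p : EuclideanSpace ℝ (Fin (m+1))) - (q : EuclideanSpace ℝ (Fin (m+1)))‖ := by
  rw [Subtype.dist_eq, dist_eq_norm]

lemma sphdist2 (p q : Metric.sphere (0 : EuclideanSpace ℝ (Fin (m+1))) 1) :
    dist p q ≤ 2 := by
  rw [sphdist]
  calc ‖(p : EuclideanSpace ℝ (Fin (m+1))) - (q : EuclideanSpace ℝ (Fin (m+1)))‖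
      ≤ ‖(p:EuclideanSpace ℝ (Fin (m+1)))‖ + ‖(q:EuclideanSpace ℝ (Fin (m+1)))‖ := norm_sub_le _ _
    _ ≤ 2 := by rw [sphnorm, sphnorm]; norm_num

lemma farlem {t d : ℝ} (p q : Metric.sphere (0 : EuclideanSpace ℝ (Fin (m+1))) 1)
    (ht : 0 < t) (htd : t ≤ 2*d) : dist p q ≤ 4/t * d := by
  calc dist p q ≤ 2 := sphdist2 p q
    _ ≤ 4/t*d := by rw [div_mul_eq_mul_div, le_div_iff₀ ht]; linarith

lemma dirlem {L a b t d : ℝ} {p q : EuclideanSpace ℝ (Fin (m+1))} (hp : ‖p‖ = a) (hq : ‖q‖ = b)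
    (hta : t ≤ a) (htb : t ≤ b) (ht : 0 < t) (hL : 0 ≤ L)
    (hpq : ‖p - q‖ ≤ L * d) (hab : |a - b| ≤ d) (hd : 0 ≤ d) :
    ‖a⁻¹ • p - b⁻¹ • q‖ ≤ (L+1)/t * d := by
  have ha : 0 < a := lt_of_lt_of_le ht hta
  have hb : 0 < b := lt_of_lt_of_le ht htb
  have key : a⁻¹ • p - b⁻¹ • q = a⁻¹ • (p - q) + (a⁻¹ - b⁻¹) • q := by
    rw [smul_sub, sub_smul]; abel
  rw [key]
  have h1 : ‖a⁻¹ • (p - q)‖ ≤ L*d/t := by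
    rw [norm_smul, Real.norm_eq_abs, abs_inv, abs_of_pos ha]
    have e1 : a⁻¹ * ‖p-q‖ ≤ a⁻¹*(L*d) := by
      apply mul_le_mul_of_nonneg_left hpq (by positivity)
    refine e1.trans ?_
    rw [div_eq_mul_inv, mul_comm (L*d) t⁻¹]
    apply mul_le_mul_of_nonneg_right _ (by positivity)
    exact inv_anti₀ ht hta
  have h2 : ‖(a⁻¹ - b⁻¹) • q‖ ≤ d/t := by
    rw [norm_smul, hq, Real.norm_eq_abs]
    have e : |a⁻¹ - b⁻¹| = |b - a|/(a*b) := by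
      rw [inv_sub_inv ha.ne' hb.ne', abs_div, abs_of_pos (mul_pos ha hb)]
    rw [e, abs_sub_comm]
    rw [div_mul_eq_mul_div, div_le_div_iff₀ (by positivity) ht]
    have : |a - b| * t ≤ d * a := by
      calc |a-b| * t ≤ d * t := by apply mul_le_mul_of_nonneg_right hab ht.le
        _ ≤ d * a := by apply mul_le_mul_of_nonneg_left hta hd
    nlinarith
  calc ‖a⁻¹ • (p - q) + (a⁻¹ - b⁻¹) • q‖ ≤ ‖a⁻¹ • (p - q)‖ + ‖(a⁻¹ - b⁻¹) • q‖ := norm_add_le _ _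
    _ ≤ L*d/t + d/t := add_le_add h1 h2
    _ = (L+1)/t*d := by ring

end Sph

section Main
variable {X : Type*} [MetricSpace X]

lemma lemBA (x₀ : X) (hdisc : ∃ ε > 0, ∀ x y : X, x ≠ y → ε ≤ dist x y) (m : ℕ)
    (hb : PropB x₀ m) : PropA x₀ m := by
  classical
  obtain ⟨ε, hε, hsep⟩ := hdisc
  intro A f hnorm hlip
  obtain ⟨lam, hlam0, hflip⟩ := hlip
  set M : ℝ := (4:ℝ)^(8:ℕ) with hMdef
  have hM1 : (1:ℝ) < M := by rw [hMdef]; norm_num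
  have hM0 : (0:ℝ) < M := by linarith
  have epos : ∀ n : ℕ, (0:ℝ) < ε*4^n := fun n => by positivity
  have rad0' : ∀ (l n : ℕ), 8*l = n → ε*M^l = ε*4^n := by
    intro l n h; rw [hMdef]; exact radform0 ε l n h
  have rad : ∀ (j l n : ℕ), j + 8*l = n → (ε*4^j)*M^l = ε*4^n := by
    intro j l n h; rw [hMdef]; exact radform ε j l n h
  -- window membership builders
  have memP : ∀ (k : ℕ) (x : X), ε*4^(16*k) ≤ dist x x₀ → dist x x₀ < ε*4^(16*k+8) →
      x ∈ Annulus x₀ (ε*M^(2*k)) (ε*M^(2*k+1)) := by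
    intro k x h1 h2
    exact ⟨by rw [rad0' (2*k) (16*k) (by ring)]; exact h1,
           by rw [rad0' (2*k+1) (16*k+8) (by ring)]; exact h2⟩
  have memR : ∀ (k : ℕ) (x : X), ε*4^(16*k+8) ≤ dist x x₀ → dist x x₀ < ε*4^(16*k+16) →
      x ∈ Annulus x₀ ((ε*4^8)*M^(2*k)) ((ε*4^8)*M^(2*k+1)) := by
    intro k x h1 h2
    exact ⟨by rw [rad 8 (2*k) (16*k+8) (by ring)]; exact h1,
           by rw [rad 8 (2*k+1) (16*k+16) (by ring)]; exact h2⟩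
  have memQ : ∀ (k : ℕ) (x : X), ε*4^(16*k+4) ≤ dist x x₀ → dist x x₀ < ε*4^(16*k+12) →
      x ∈ Annulus x₀ ((ε*4^4)*M^(2*k)) ((ε*4^4)*M^(2*k+1)) := by
    intro k x h1 h2
    exact ⟨by rw [rad 4 (2*k) (16*k+4) (by ring)]; exact h1,
           by rw [rad 4 (2*k+1) (16*k+12) (by ring)]; exact h2⟩
  have memS : ∀ (k : ℕ) (x : X), ε*4^(16*k+12) ≤ dist x x₀ → dist x x₀ < ε*4^(16*k+20) →
      x ∈ Annulus x₀ ((ε*4^12)*M^(2*k)) ((ε*4^12)*M^(2*k+1)) := by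
    intro k x h1 h2
    exact ⟨by rw [rad 12 (2*k) (16*k+12) (by ring)]; exact h1,
           by rw [rad 12 (2*k+1) (16*k+20) (by ring)]; exact h2⟩
  -- direction map on the sphere
  have he1n : ‖(EuclideanSpace.single (0 : Fin (m+1)) (1:ℝ))‖ = 1 := by
    simp [EuclideanSpace.norm_single]
  set uval : X → EuclideanSpace ℝ (Fin (m+1)) :=
    fun x => if h : x ∈ A ∧ dist x x₀ ≠ 0 then (dist x x₀)⁻¹ • f ⟨x, h.1⟩
      else EuclideanSpace.single (0 : Fin (m+1)) (1:ℝ) with huval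
  have huvaln : ∀ x, ‖uval x‖ = 1 := by
    intro x
    simp only [huval]
    split_ifs with h
    · rw [norm_smul, Real.norm_eq_abs, abs_inv, abs_of_nonneg dist_nonneg, hnorm ⟨x, h.1⟩,
        inv_mul_cancel₀ h.2]
    · exact he1n
  set usph : X → Metric.sphere (0 : EuclideanSpace ℝ (Fin (m+1))) 1 :=
    fun x => ⟨uval x, by rw [mem_sphere_zero_iff_norm]; exact huvaln x⟩ with husph
  have husA : ∀ (x : X) (hx : x ∈ A) (h0 : dist x x₀ ≠ 0),
      (usph x : EuclideanSpace ℝ (Fin (m+1))) = (dist x x₀)⁻¹ • f ⟨x, hx⟩ := by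
    intro x hx h0
    show uval x = _
    simp only [huval]
    rw [dif_pos ⟨hx, h0⟩]
  have ulem : ∀ (x y : X), x ∈ A → y ∈ A → ∀ t : ℝ, 0 < t → t ≤ dist x x₀ → t ≤ dist y x₀ →
      dist (usph x) (usph y) ≤ (lam+1)/t * dist x y := by
    intro x y hx hy t ht htx hty
    have h0x : dist x x₀ ≠ 0 := (lt_of_lt_of_le ht htx).ne'
    have h0y : dist y x₀ ≠ 0 := (lt_of_lt_of_le ht hty).ne'
    rw [sphdist, husA x hx h0x, husA y hy h0y]
    refine dirlem (hnorm ⟨x,hx⟩) (hnorm ⟨y,hy⟩) htx hty ht hlam0 ?_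
      (abs_dist_sub_le _ _ _) dist_nonneg
    rw [← dist_eq_norm]
    have h := hflip ⟨x,hx⟩ ⟨y,hy⟩
    rwa [Subtype.dist_eq] at h
  -- P application
  have hfPlip : ∀ k : ℕ, 1 ≤ k →
      ∀ x y : (A ∩ Annulus x₀ (ε*M^(2*k)) (ε*M^(2*k+1)) : Set X),
      dist (usph (x:X)) (usph (y:X)) ≤ ((lam+1)/ε) / M^(2*k) * dist (x:X) (y:X) := by
    intro k hk x y
    have e : ((lam+1)/ε)/M^(2*k) = (lam+1)/(ε*4^(16*k)) := by
      rw [hMdef]; exact sform0 (lam+1) ε (2*k) (16*k) (by ring)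
    rw [e]
    refine ulem _ _ x.2.1 y.2.1 (ε*4^(16*k)) (epos _) ?_ ?_
    · exact le_trans (le_of_eq (rad0' (2*k) (16*k) (by ring)).symm) x.2.2.1
    · exact le_trans (le_of_eq (rad0' (2*k) (16*k) (by ring)).symm) y.2.2.1
  obtain ⟨cP, hcP, gP, hgP⟩ := hb ε ((lam+1)/ε) M hε (by positivity) hM1
    (fun k => A ∩ Annulus x₀ (ε*M^(2*k)) (ε*M^(2*k+1)))
    (fun k hk => Set.inter_subset_right)
    (fun k x => usph (x:X)) hfPlip
  -- R application
  have hfRlip : ∀ k : ℕ, 1 ≤ k →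
      ∀ x y : (A ∩ Annulus x₀ ((ε*4^8)*M^(2*k)) ((ε*4^8)*M^(2*k+1)) : Set X),
      dist (usph (x:X)) (usph (y:X)) ≤ ((lam+1)/(ε*4^8)) / M^(2*k) * dist (x:X) (y:X) := by
    intro k hk x y
    have e : ((lam+1)/(ε*4^8))/M^(2*k) = (lam+1)/(ε*4^(16*k+8)) := by
      rw [hMdef]; exact sform (lam+1) ε 8 (2*k) (16*k+8) (by ring)
    rw [e]
    refine ulem _ _ x.2.1 y.2.1 (ε*4^(16*k+8)) (epos _) ?_ ?_
    · exact le_trans (le_of_eq (rad 8 (2*k) (16*k+8) (by ring)).symm) x.2.2.1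
    · exact le_trans (le_of_eq (rad 8 (2*k) (16*k+8) (by ring)).symm) y.2.2.1
  obtain ⟨cR, hcR, gR, hgR⟩ := hb (ε*4^8) ((lam+1)/(ε*4^8)) M (by positivity) (by positivity) hM1
    (fun k => A ∩ Annulus x₀ ((ε*4^8)*M^(2*k)) ((ε*4^8)*M^(2*k+1)))
    (fun k hk => Set.inter_subset_right)
    (fun k x => usph (x:X)) hfRlip
  have gPA : ∀ (k : ℕ), 1 ≤ k → ∀ (x : X), x ∈ A →
      ∀ (hAn : x ∈ Annulus x₀ (ε*M^(2*k)) (ε*M^(2*k+1))), gP k ⟨x, hAn⟩ = usph x :=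
    fun k hk x hx hAn => (hgP k hk).2 x ⟨hx, hAn⟩ hAn
  have gRA : ∀ (k : ℕ), 1 ≤ k → ∀ (x : X), x ∈ A →
      ∀ (hAn : x ∈ Annulus x₀ ((ε*4^8)*M^(2*k)) ((ε*4^8)*M^(2*k+1))), gR k ⟨x, hAn⟩ = usph x :=
    fun k hk x hx hAn => (hgR k hk).2 x ⟨hx, hAn⟩ hAn
  -- far pair helper
  have hfar : ∀ (p q : Metric.sphere (0:EuclideanSpace ℝ (Fin (m+1))) 1) (u v : X) (n : ℕ),
      dist u x₀ < ε*4^n → ε*4^(n+2) ≤ dist v x₀ → dist p q ≤ 4/(ε*4^(n+2)) * dist u v := by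
    intro p q u v n hu hv
    refine farlem p q (epos _) ?_
    have h1 : dist v x₀ - dist u x₀ ≤ dist u v := by
      have h := abs_dist_sub_le v u x₀
      rw [dist_comm v u] at h
      linarith [le_abs_self (dist v x₀ - dist u x₀)]
    have h2 : (ε*4^n)*2 ≤ ε*4^(n+2) := by
      have e : (4:ℝ)^(n+2) = 4^n*16 := by rw [pow_add]; norm_num
      rw [e]
      nlinarith [(epos n).le]
    linarith
  have hcomp : ∀ (k : ℕ) (sQ D d0 a : ℝ), 0 ≤ d0 → a ≤ sQ → D ≤ a/M^(2*k)*d0 →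
      D ≤ sQ/M^(2*k)*d0 := by
    intro k sQ D d0 a hd0 ha hD
    refine hD.trans (mul_le_mul_of_nonneg_right ?_ hd0)
    rw [div_eq_mul_inv, div_eq_mul_inv]
    exact mul_le_mul_of_nonneg_right ha (by positivity)
  have hshift : ∀ (k : ℕ) (a : ℝ), 0 ≤ a → a/M^(2*(k+1)) ≤ a/M^(2*k) := by
    intro k a ha
    rw [div_eq_mul_inv, div_eq_mul_inv]
    exact mul_le_mul_of_nonneg_left
      (inv_anti₀ (pow_pos hM0 _) (pow_le_pow_right₀ hM1.le (by omega))) ha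
  ----------------------------------------------------------------
  -- Q application
  ----------------------------------------------------------------
  set AQ : ℕ → Set X := fun k => {x | (ε*4^(16*k+4) ≤ dist x x₀ ∧ dist x x₀ < ε*4^(16*k+6))
    ∨ (x ∈ A ∧ ε*4^(16*k+6) ≤ dist x x₀ ∧ dist x x₀ < ε*4^(16*k+10))
    ∨ (ε*4^(16*k+10) ≤ dist x x₀ ∧ dist x x₀ < ε*4^(16*k+12))} with hAQdef
  have AQcases : ∀ (k : ℕ) (x : X), x ∈ AQ k →
      (ε*4^(16*k+4) ≤ dist x x₀ ∧ dist x x₀ < ε*4^(16*k+6))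
      ∨ (x ∈ A ∧ ε*4^(16*k+6) ≤ dist x x₀ ∧ dist x x₀ < ε*4^(16*k+10))
      ∨ (ε*4^(16*k+10) ≤ dist x x₀ ∧ dist x x₀ < ε*4^(16*k+12)) := fun k x hx => hx
  have AQlow : ∀ (k : ℕ) (x : X), x ∈ AQ k → ε*4^(16*k+4) ≤ dist x x₀ := by
    intro k x hx
    rcases AQcases k x hx with h | h | h
    · exact h.1
    · exact elow hε (by omega) h.2.1
    · exact elow hε (by omega) h.1
  have AQhigh : ∀ (k : ℕ) (x : X), x ∈ AQ k → dist x x₀ < ε*4^(16*k+12) := by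
    intro k x hx
    rcases AQcases k x hx with h | h | h
    · exact ehigh hε (by omega) h.2
    · exact ehigh hε (by omega) h.2.2
    · exact h.2
  have AQsub : ∀ k, 1 ≤ k → AQ k ⊆ Annulus x₀ ((ε*4^4)*M^(2*k)) ((ε*4^4)*M^(2*k+1)) :=
    fun k hk x hx => memQ k x (AQlow k x hx) (AQhigh k x hx)
  set fQ : (k : ℕ) → (AQ k) → Metric.sphere (0 : EuclideanSpace ℝ (Fin (m+1))) 1 :=
    fun k x =>
      if h1 : dist (x:X) x₀ < ε*4^(16*k+6) then
        gP k ⟨(x:X), memP k (x:X) (elow hε (by omega) (AQlow k (x:X) x.2)) (ehigh hε (by omega) h1)⟩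
      else if h2 : dist (x:X) x₀ < ε*4^(16*k+10) then usph (x:X)
      else gR k ⟨(x:X), memR k (x:X) (elow hε (by omega) (not_lt.mp h2))
        (ehigh hε (by omega) (AQhigh k (x:X) x.2))⟩ with hfQdef
  have fQ1 : ∀ (k : ℕ) (x : AQ k) (h1 : dist (x:X) x₀ < ε*4^(16*k+6))
      (hm : (x:X) ∈ Annulus x₀ (ε*M^(2*k)) (ε*M^(2*k+1))), fQ k x = gP k ⟨(x:X), hm⟩ := by
    intro k x h1 hm
    simp only [hfQdef]
    rw [dif_pos h1]
  have fQ2 : ∀ (k : ℕ) (x : AQ k) (h1 : ¬ dist (x:X) x₀ < ε*4^(16*k+6))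
      (h2 : dist (x:X) x₀ < ε*4^(16*k+10)), fQ k x = usph (x:X) := by
    intro k x h1 h2
    simp only [hfQdef]
    rw [dif_neg h1, dif_pos h2]
  have fQ3 : ∀ (k : ℕ) (x : AQ k) (h2 : ¬ dist (x:X) x₀ < ε*4^(16*k+10))
      (hm : (x:X) ∈ Annulus x₀ ((ε*4^8)*M^(2*k)) ((ε*4^8)*M^(2*k+1))), fQ k x = gR k ⟨(x:X), hm⟩ := by
    intro k x h2 hm
    have h1 : ¬ dist (x:X) x₀ < ε*4^(16*k+6) := by
      intro hcon
      exact h2 (ehigh hε (by omega) hcon)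
    simp only [hfQdef]
    rw [dif_neg h1, dif_neg h2]
  have hfQlip : ∀ k : ℕ, 1 ≤ k → ∀ x y : (AQ k), dist (fQ k x) (fQ k y) ≤
      (cP + cR + (lam+1)/(ε*4^6) + 4/(ε*4^8) + 4/(ε*4^10)) / M^(2*k) * dist (x:X) (y:X) := by
    intro k hk
    have hcc : (0:ℝ) ≤ (lam+1)/(ε*4^6) := by positivity
    have hd8 : (0:ℝ) ≤ 4/(ε*4^8) := by positivity
    have hd10 : (0:ℝ) ≤ 4/(ε*4^10) := by positivity
    have hcP' := hcP.le
    have hcR' := hcR.le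
    have hkey : ∀ x y : (AQ k), dist (x:X) x₀ ≤ dist (y:X) x₀ →
        dist (fQ k x) (fQ k y) ≤
        (cP + cR + (lam+1)/(ε*4^6) + 4/(ε*4^8) + 4/(ε*4^10)) / M^(2*k) * dist (x:X) (y:X) := by
      intro x y hord
      have hd0 : (0:ℝ) ≤ dist (x:X) (y:X) := dist_nonneg
      by_cases h1x : dist (x:X) x₀ < ε*4^(16*k+6)
      · have mx : (x:X) ∈ Annulus x₀ (ε*M^(2*k)) (ε*M^(2*k+1)) :=
          memP k (x:X) (elow hε (by omega) (AQlow k (x:X) x.2)) (ehigh hε (by omega) h1x)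
        rw [fQ1 k x h1x mx]
        by_cases h1y : dist (y:X) x₀ < ε*4^(16*k+6)
        · have my : (y:X) ∈ Annulus x₀ (ε*M^(2*k)) (ε*M^(2*k+1)) :=
            memP k (y:X) (elow hε (by omega) (AQlow k (y:X) y.2)) (ehigh hε (by omega) h1y)
          rw [fQ1 k y h1y my]
          exact hcomp k _ _ _ cP hd0 (by linarith) ((hgP k hk).1 ⟨(x:X), mx⟩ ⟨(y:X), my⟩)
        · by_cases h2y : dist (y:X) x₀ < ε*4^(16*k+10)
          · have hyA : (y:X) ∈ A := by
              rcases AQcases k (y:X) y.2 with h | h | h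
              · exact absurd h.2 h1y
              · exact h.1
              · linarith [h.1]
            rw [fQ2 k y h1y h2y]
            by_cases hmid : dist (y:X) x₀ < ε*4^(16*k+8)
            · have my : (y:X) ∈ Annulus x₀ (ε*M^(2*k)) (ε*M^(2*k+1)) :=
                memP k (y:X) (elow hε (by omega) (not_lt.mp h1y)) hmid
              rw [← gPA k hk (y:X) hyA my]
              exact hcomp k _ _ _ cP hd0 (by linarith) ((hgP k hk).1 ⟨(x:X), mx⟩ ⟨(y:X), my⟩)
            · have hb1 := hfar (gP k ⟨(x:X),mx⟩) (usph (y:X)) (x:X) (y:X) (16*k+6) h1x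
                (elow hε (by omega) (not_lt.mp hmid))
              have e : (4/(ε*4^8))/M^(2*k) = 4/(ε*4^(16*k+6+2)) := by
                rw [hMdef]; exact sform 4 ε 8 (2*k) (16*k+6+2) (by omega)
              exact hcomp k _ _ _ (4/(ε*4^8)) hd0 (by linarith) (by rw [e]; exact hb1)
          · have my : (y:X) ∈ Annulus x₀ ((ε*4^8)*M^(2*k)) ((ε*4^8)*M^(2*k+1)) :=
              memR k (y:X) (elow hε (by omega) (not_lt.mp h2y))
                (ehigh hε (by omega) (AQhigh k (y:X) y.2))
            rw [fQ3 k y h2y my]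
            have hb1 := hfar (gP k ⟨(x:X),mx⟩) (gR k ⟨(y:X),my⟩) (x:X) (y:X) (16*k+6) h1x
              (elow hε (by omega) (not_lt.mp h2y))
            have e : (4/(ε*4^8))/M^(2*k) = 4/(ε*4^(16*k+6+2)) := by
              rw [hMdef]; exact sform 4 ε 8 (2*k) (16*k+6+2) (by omega)
            exact hcomp k _ _ _ (4/(ε*4^8)) hd0 (by linarith) (by rw [e]; exact hb1)
      · have h1y : ¬ dist (y:X) x₀ < ε*4^(16*k+6) := not_lt.mpr (le_trans (not_lt.mp h1x) hord)
        by_cases h2x : dist (x:X) x₀ < ε*4^(16*k+10)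
        · have hxA : (x:X) ∈ A := by
            rcases AQcases k (x:X) x.2 with h | h | h
            · exact absurd h.2 h1x
            · exact h.1
            · linarith [h.1]
          rw [fQ2 k x h1x h2x]
          by_cases h2y : dist (y:X) x₀ < ε*4^(16*k+10)
          · have hyA : (y:X) ∈ A := by
              rcases AQcases k (y:X) y.2 with h | h | h
              · exact absurd h.2 h1y
              · exact h.1
              · linarith [h.1]
            rw [fQ2 k y h1y h2y]
            have hb1 := ulem (x:X) (y:X) hxA hyA (ε*4^(16*k+6)) (epos _)
              (not_lt.mp h1x) (not_lt.mp h1y)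
            have e : ((lam+1)/(ε*4^6))/M^(2*k) = (lam+1)/(ε*4^(16*k+6)) := by
              rw [hMdef]; exact sform (lam+1) ε 6 (2*k) (16*k+6) (by omega)
            exact hcomp k _ _ _ ((lam+1)/(ε*4^6)) hd0 (by linarith) (by rw [e]; exact hb1)
          · have my : (y:X) ∈ Annulus x₀ ((ε*4^8)*M^(2*k)) ((ε*4^8)*M^(2*k+1)) :=
              memR k (y:X) (elow hε (by omega) (not_lt.mp h2y))
                (ehigh hε (by omega) (AQhigh k (y:X) y.2))
            rw [fQ3 k y h2y my]
            by_cases hxup : ε*4^(16*k+8) ≤ dist (x:X) x₀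
            · have mx : (x:X) ∈ Annulus x₀ ((ε*4^8)*M^(2*k)) ((ε*4^8)*M^(2*k+1)) :=
                memR k (x:X) hxup (ehigh hε (by omega) h2x)
              rw [← gRA k hk (x:X) hxA mx]
              exact hcomp k _ _ _ cR hd0 (by linarith) ((hgR k hk).1 ⟨(x:X), mx⟩ ⟨(y:X), my⟩)
            · have hb1 := hfar (usph (x:X)) (gR k ⟨(y:X),my⟩) (x:X) (y:X) (16*k+8)
                (not_le.mp hxup) (elow hε (by omega) (not_lt.mp h2y))
              have e : (4/(ε*4^10))/M^(2*k) = 4/(ε*4^(16*k+8+2)) := by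
                rw [hMdef]; exact sform 4 ε 10 (2*k) (16*k+8+2) (by omega)
              exact hcomp k _ _ _ (4/(ε*4^10)) hd0 (by linarith) (by rw [e]; exact hb1)
        · have h2y : ¬ dist (y:X) x₀ < ε*4^(16*k+10) := not_lt.mpr (le_trans (not_lt.mp h2x) hord)
          have mx : (x:X) ∈ Annulus x₀ ((ε*4^8)*M^(2*k)) ((ε*4^8)*M^(2*k+1)) :=
            memR k (x:X) (elow hε (by omega) (not_lt.mp h2x))
              (ehigh hε (by omega) (AQhigh k (x:X) x.2))
          have my : (y:X) ∈ Annulus x₀ ((ε*4^8)*M^(2*k)) ((ε*4^8)*M^(2*k+1)) :=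
            memR k (y:X) (elow hε (by omega) (not_lt.mp h2y))
              (ehigh hε (by omega) (AQhigh k (y:X) y.2))
          rw [fQ3 k x h2x mx, fQ3 k y h2y my]
          exact hcomp k _ _ _ cR hd0 (by linarith) ((hgR k hk).1 ⟨(x:X), mx⟩ ⟨(y:X), my⟩)
    intro x y
    rcases le_total (dist (x:X) x₀) (dist (y:X) x₀) with hord | hord
    · exact hkey x y hord
    · rw [dist_comm (fQ k x) (fQ k y), dist_comm (x:X) (y:X)]
      exact hkey y x hord
  obtain ⟨cQ, hcQ, gQ, hgQ⟩ := hb (ε*4^4)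
    (cP + cR + (lam+1)/(ε*4^6) + 4/(ε*4^8) + 4/(ε*4^10)) M (by positivity)
    (by have : (0:ℝ) < (lam+1)/(ε*4^6) := by positivity
        have : (0:ℝ) < 4/(ε*4^8) := by positivity
        have : (0:ℝ) < 4/(ε*4^10) := by positivity
        linarith) hM1 AQ AQsub fQ hfQlip
  ----------------------------------------------------------------
  -- S application
  ----------------------------------------------------------------
  set AS : ℕ → Set X := fun k => {x | (ε*4^(16*k+12) ≤ dist x x₀ ∧ dist x x₀ < ε*4^(16*k+14))
    ∨ (x ∈ A ∧ ε*4^(16*k+14) ≤ dist x x₀ ∧ dist x x₀ < ε*4^(16*k+18))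
    ∨ (ε*4^(16*k+18) ≤ dist x x₀ ∧ dist x x₀ < ε*4^(16*k+20))} with hASdef
  have AScases : ∀ (k : ℕ) (x : X), x ∈ AS k →
      (ε*4^(16*k+12) ≤ dist x x₀ ∧ dist x x₀ < ε*4^(16*k+14))
      ∨ (x ∈ A ∧ ε*4^(16*k+14) ≤ dist x x₀ ∧ dist x x₀ < ε*4^(16*k+18))
      ∨ (ε*4^(16*k+18) ≤ dist x x₀ ∧ dist x x₀ < ε*4^(16*k+20)) := fun k x hx => hx
  have ASlow : ∀ (k : ℕ) (x : X), x ∈ AS k → ε*4^(16*k+12) ≤ dist x x₀ := by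
    intro k x hx
    rcases AScases k x hx with h | h | h
    · exact h.1
    · exact elow hε (by omega) h.2.1
    · exact elow hε (by omega) h.1
  have AShigh : ∀ (k : ℕ) (x : X), x ∈ AS k → dist x x₀ < ε*4^(16*k+20) := by
    intro k x hx
    rcases AScases k x hx with h | h | h
    · exact ehigh hε (by omega) h.2
    · exact ehigh hε (by omega) h.2.2
    · exact h.2
  have ASsub : ∀ k, 1 ≤ k → AS k ⊆ Annulus x₀ ((ε*4^12)*M^(2*k)) ((ε*4^12)*M^(2*k+1)) :=
    fun k hk x hx => memS k x (ASlow k x hx) (AShigh k x hx)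
  have memPk1 : ∀ (k : ℕ) (x : X), ε*4^(16*k+16) ≤ dist x x₀ → dist x x₀ < ε*4^(16*k+20) →
      x ∈ Annulus x₀ (ε*M^(2*(k+1))) (ε*M^(2*(k+1)+1)) := by
    intro k x h1 h2
    exact memP (k+1) x (elow hε (by omega) h1) (ehigh hε (by omega) h2)
  set fS : (k : ℕ) → (AS k) → Metric.sphere (0 : EuclideanSpace ℝ (Fin (m+1))) 1 :=
    fun k x =>
      if h1 : dist (x:X) x₀ < ε*4^(16*k+14) then
        gR k ⟨(x:X), memR k (x:X) (elow hε (by omega) (ASlow k (x:X) x.2)) (ehigh hε (by omega) h1)⟩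
      else if h2 : dist (x:X) x₀ < ε*4^(16*k+18) then usph (x:X)
      else gP (k+1) ⟨(x:X), memPk1 k (x:X) (elow hε (by omega) (not_lt.mp h2))
        (AShigh k (x:X) x.2)⟩ with hfSdef
  have fS1 : ∀ (k : ℕ) (x : AS k) (h1 : dist (x:X) x₀ < ε*4^(16*k+14))
      (hm : (x:X) ∈ Annulus x₀ ((ε*4^8)*M^(2*k)) ((ε*4^8)*M^(2*k+1))), fS k x = gR k ⟨(x:X), hm⟩ := by
    intro k x h1 hm
    simp only [hfSdef]
    rw [dif_pos h1]
  have fS2 : ∀ (k : ℕ) (x : AS k) (h1 : ¬ dist (x:X) x₀ < ε*4^(16*k+14))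
      (h2 : dist (x:X) x₀ < ε*4^(16*k+18)), fS k x = usph (x:X) := by
    intro k x h1 h2
    simp only [hfSdef]
    rw [dif_neg h1, dif_pos h2]
  have fS3 : ∀ (k : ℕ) (x : AS k) (h2 : ¬ dist (x:X) x₀ < ε*4^(16*k+18))
      (hm : (x:X) ∈ Annulus x₀ (ε*M^(2*(k+1))) (ε*M^(2*(k+1)+1))), fS k x = gP (k+1) ⟨(x:X), hm⟩ := by
    intro k x h2 hm
    have h1 : ¬ dist (x:X) x₀ < ε*4^(16*k+14) := by
      intro hcon
      exact h2 (ehigh hε (by omega) hcon)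
    simp only [hfSdef]
    rw [dif_neg h1, dif_neg h2]
  have hfSlip : ∀ k : ℕ, 1 ≤ k → ∀ x y : (AS k), dist (fS k x) (fS k y) ≤
      (cP + cR + (lam+1)/(ε*4^14) + 4/(ε*4^16) + 4/(ε*4^18)) / M^(2*k) * dist (x:X) (y:X) := by
    intro k hk
    have hcc : (0:ℝ) ≤ (lam+1)/(ε*4^14) := by positivity
    have hd16 : (0:ℝ) ≤ 4/(ε*4^16) := by positivity
    have hd18 : (0:ℝ) ≤ 4/(ε*4^18) := by positivity
    have hcP' := hcP.le
    have hcR' := hcR.le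
    have hkey : ∀ x y : (AS k), dist (x:X) x₀ ≤ dist (y:X) x₀ →
        dist (fS k x) (fS k y) ≤
        (cP + cR + (lam+1)/(ε*4^14) + 4/(ε*4^16) + 4/(ε*4^18)) / M^(2*k) * dist (x:X) (y:X) := by
      intro x y hord
      have hd0 : (0:ℝ) ≤ dist (x:X) (y:X) := dist_nonneg
      by_cases h1x : dist (x:X) x₀ < ε*4^(16*k+14)
      · have mx : (x:X) ∈ Annulus x₀ ((ε*4^8)*M^(2*k)) ((ε*4^8)*M^(2*k+1)) :=
          memR k (x:X) (elow hε (by omega) (ASlow k (x:X) x.2)) (ehigh hε (by omega) h1x)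
        rw [fS1 k x h1x mx]
        by_cases h1y : dist (y:X) x₀ < ε*4^(16*k+14)
        · have my : (y:X) ∈ Annulus x₀ ((ε*4^8)*M^(2*k)) ((ε*4^8)*M^(2*k+1)) :=
            memR k (y:X) (elow hε (by omega) (ASlow k (y:X) y.2)) (ehigh hε (by omega) h1y)
          rw [fS1 k y h1y my]
          exact hcomp k _ _ _ cR hd0 (by linarith) ((hgR k hk).1 ⟨(x:X), mx⟩ ⟨(y:X), my⟩)
        · by_cases h2y : dist (y:X) x₀ < ε*4^(16*k+18)
          · have hyA : (y:X) ∈ A := by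
              rcases AScases k (y:X) y.2 with h | h | h
              · exact absurd h.2 h1y
              · exact h.1
              · linarith [h.1]
            rw [fS2 k y h1y h2y]
            by_cases hmid : dist (y:X) x₀ < ε*4^(16*k+16)
            · have my : (y:X) ∈ Annulus x₀ ((ε*4^8)*M^(2*k)) ((ε*4^8)*M^(2*k+1)) :=
                memR k (y:X) (elow hε (by omega) (not_lt.mp h1y)) hmid
              rw [← gRA k hk (y:X) hyA my]
              exact hcomp k _ _ _ cR hd0 (by linarith) ((hgR k hk).1 ⟨(x:X), mx⟩ ⟨(y:X), my⟩)
            · have hb1 := hfar (gR k ⟨(x:X),mx⟩) (usph (y:X)) (x:X) (y:X) (16*k+14) h1x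
                (elow hε (by omega) (not_lt.mp hmid))
              have e : (4/(ε*4^16))/M^(2*k) = 4/(ε*4^(16*k+14+2)) := by
                rw [hMdef]; exact sform 4 ε 16 (2*k) (16*k+14+2) (by omega)
              exact hcomp k _ _ _ (4/(ε*4^16)) hd0 (by linarith) (by rw [e]; exact hb1)
          · have my : (y:X) ∈ Annulus x₀ (ε*M^(2*(k+1))) (ε*M^(2*(k+1)+1)) :=
              memPk1 k (y:X) (elow hε (by omega) (not_lt.mp h2y)) (AShigh k (y:X) y.2)
            rw [fS3 k y h2y my]
            have hb1 := hfar (gR k ⟨(x:X),mx⟩) (gP (k+1) ⟨(y:X),my⟩) (x:X) (y:X) (16*k+14) h1x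
              (elow hε (by omega) (not_lt.mp h2y))
            have e : (4/(ε*4^16))/M^(2*k) = 4/(ε*4^(16*k+14+2)) := by
              rw [hMdef]; exact sform 4 ε 16 (2*k) (16*k+14+2) (by omega)
            exact hcomp k _ _ _ (4/(ε*4^16)) hd0 (by linarith) (by rw [e]; exact hb1)
      · have h1y : ¬ dist (y:X) x₀ < ε*4^(16*k+14) := not_lt.mpr (le_trans (not_lt.mp h1x) hord)
        by_cases h2x : dist (x:X) x₀ < ε*4^(16*k+18)
        · have hxA : (x:X) ∈ A := by
            rcases AScases k (x:X) x.2 with h | h | h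
            · exact absurd h.2 h1x
            · exact h.1
            · linarith [h.1]
          rw [fS2 k x h1x h2x]
          by_cases h2y : dist (y:X) x₀ < ε*4^(16*k+18)
          · have hyA : (y:X) ∈ A := by
              rcases AScases k (y:X) y.2 with h | h | h
              · exact absurd h.2 h1y
              · exact h.1
              · linarith [h.1]
            rw [fS2 k y h1y h2y]
            have hb1 := ulem (x:X) (y:X) hxA hyA (ε*4^(16*k+14)) (epos _)
              (not_lt.mp h1x) (not_lt.mp h1y)
            have e : ((lam+1)/(ε*4^14))/M^(2*k) = (lam+1)/(ε*4^(16*k+14)) := by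
              rw [hMdef]; exact sform (lam+1) ε 14 (2*k) (16*k+14) (by omega)
            exact hcomp k _ _ _ ((lam+1)/(ε*4^14)) hd0 (by linarith) (by rw [e]; exact hb1)
          · have my : (y:X) ∈ Annulus x₀ (ε*M^(2*(k+1))) (ε*M^(2*(k+1)+1)) :=
              memPk1 k (y:X) (elow hε (by omega) (not_lt.mp h2y)) (AShigh k (y:X) y.2)
            rw [fS3 k y h2y my]
            by_cases hxup : ε*4^(16*k+16) ≤ dist (x:X) x₀
            · have mx : (x:X) ∈ Annulus x₀ (ε*M^(2*(k+1))) (ε*M^(2*(k+1)+1)) :=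
                memPk1 k (x:X) hxup (ehigh hε (by omega) h2x)
              rw [← gPA (k+1) (by omega) (x:X) hxA mx]
              refine hcomp k _ _ _ cP hd0 (by linarith) ?_
              refine le_trans ((hgP (k+1) (by omega)).1 ⟨(x:X), mx⟩ ⟨(y:X), my⟩) ?_
              exact mul_le_mul_of_nonneg_right (hshift k cP hcP.le) hd0
            · have hb1 := hfar (usph (x:X)) (gP (k+1) ⟨(y:X),my⟩) (x:X) (y:X) (16*k+16)
                (not_le.mp hxup) (elow hε (by omega) (not_lt.mp h2y))
              have e : (4/(ε*4^18))/M^(2*k) = 4/(ε*4^(16*k+16+2)) := by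
                rw [hMdef]; exact sform 4 ε 18 (2*k) (16*k+16+2) (by omega)
              exact hcomp k _ _ _ (4/(ε*4^18)) hd0 (by linarith) (by rw [e]; exact hb1)
        · have h2y : ¬ dist (y:X) x₀ < ε*4^(16*k+18) := not_lt.mpr (le_trans (not_lt.mp h2x) hord)
          have mx : (x:X) ∈ Annulus x₀ (ε*M^(2*(k+1))) (ε*M^(2*(k+1)+1)) :=
            memPk1 k (x:X) (elow hε (by omega) (not_lt.mp h2x)) (AShigh k (x:X) x.2)
          have my : (y:X) ∈ Annulus x₀ (ε*M^(2*(k+1))) (ε*M^(2*(k+1)+1)) :=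
            memPk1 k (y:X) (elow hε (by omega) (not_lt.mp h2y)) (AShigh k (y:X) y.2)
          rw [fS3 k x h2x mx, fS3 k y h2y my]
          refine hcomp k _ _ _ cP hd0 (by linarith) ?_
          refine le_trans ((hgP (k+1) (by omega)).1 ⟨(x:X), mx⟩ ⟨(y:X), my⟩) ?_
          exact mul_le_mul_of_nonneg_right (hshift k cP hcP.le) hd0
    intro x y
    rcases le_total (dist (x:X) x₀) (dist (y:X) x₀) with hord | hord
    · exact hkey x y hord
    · rw [dist_comm (fS k x) (fS k y), dist_comm (x:X) (y:X)]
      exact hkey y x hord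
  obtain ⟨cS, hcS, gS, hgS⟩ := hb (ε*4^12)
    (cP + cR + (lam+1)/(ε*4^14) + 4/(ε*4^16) + 4/(ε*4^18)) M (by positivity)
    (by have h1 : (0:ℝ) < (lam+1)/(ε*4^14) := by positivity
        have h2 : (0:ℝ) < 4/(ε*4^16) := by positivity
        have h3 : (0:ℝ) < 4/(ε*4^18) := by positivity
        linarith) hM1 AS ASsub fS hfSlip
  ----------------------------------------------------------------
  -- the scale selector K and the patchwork map v
  ----------------------------------------------------------------
  have ex : ∀ x : X, ∃ n : ℕ, dist x x₀ < ε*4^(16*n+21) := by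
    intro x
    obtain ⟨n, hn⟩ := pow_unbounded_of_one_lt (dist x x₀ / ε) (show (1:ℝ) < 4 by norm_num)
    refine ⟨n, ?_⟩
    have h1 : dist x x₀ < ε*4^n := by
      rw [div_lt_iff₀ hε] at hn
      nlinarith [fp_pos n]
    exact ehigh hε (by omega) h1
  have hKup : ∀ x : X, dist x x₀ < ε*4^(16*(Nat.find (ex x))+21) := fun x => Nat.find_spec (ex x)
  have hKlo : ∀ x : X, Nat.find (ex x) ≠ 0 → ε*4^(16*(Nat.find (ex x))+5) ≤ dist x x₀ := by
    intro x h0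
    have hmin := Nat.find_min (ex x) (show Nat.find (ex x) - 1 < Nat.find (ex x) by omega)
    have e : 16*(Nat.find (ex x) - 1)+21 = 16*(Nat.find (ex x))+5 := by omega
    rw [e] at hmin
    exact not_lt.mp hmin
  have hKeq : ∀ (x : X) (k : ℕ), 1 ≤ k → ε*4^(16*k+5) ≤ dist x x₀ →
      dist x x₀ < ε*4^(16*k+21) → Nat.find (ex x) = k := by
    intro x k hk hlo hup
    have hle : Nat.find (ex x) ≤ k := Nat.find_le hup
    by_contra hne
    have hlt : Nat.find (ex x) < k := by omega
    have h2 : dist x x₀ < ε*4^(16*k+5) := by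
      refine lt_of_lt_of_le (hKup x) ?_
      have := fp_mono (show 16*(Nat.find (ex x))+21 ≤ 16*k+5 by omega)
      nlinarith
    linarith
  set v : X → Metric.sphere (0 : EuclideanSpace ℝ (Fin (m+1))) 1 := fun x =>
    if h0 : Nat.find (ex x) = 0 then usph x
    else if hq : dist x x₀ < ε*4^(16*(Nat.find (ex x))+11) then
      gQ (Nat.find (ex x)) ⟨x, memQ (Nat.find (ex x)) x (elow hε (by omega) (hKlo x h0))
        (ehigh hε (by omega) hq)⟩
    else if hr : dist x x₀ < ε*4^(16*(Nat.find (ex x))+13) then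
      gR (Nat.find (ex x)) ⟨x, memR (Nat.find (ex x)) x (elow hε (by omega) (not_lt.mp hq))
        (ehigh hε (by omega) hr)⟩
    else if hs2 : dist x x₀ < ε*4^(16*(Nat.find (ex x))+19) then
      gS (Nat.find (ex x)) ⟨x, memS (Nat.find (ex x)) x (elow hε (by omega) (not_lt.mp hr))
        (ehigh hε (by omega) hs2)⟩
    else
      gP (Nat.find (ex x) + 1) ⟨x, memP (Nat.find (ex x) + 1) x (elow hε (by omega) (not_lt.mp hs2))
        (ehigh hε (by omega) (hKup x))⟩ with hvdef
  have V1 : ∀ (k : ℕ), 1 ≤ k → ∀ (x : X), ε*4^(16*k+5) ≤ dist x x₀ →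
      dist x x₀ < ε*4^(16*k+11) →
      ∀ (hm : x ∈ Annulus x₀ ((ε*4^4)*M^(2*k)) ((ε*4^4)*M^(2*k+1))), v x = gQ k ⟨x, hm⟩ := by
    intro k hk x hlo hup hm
    have hKx : Nat.find (ex x) = k := hKeq x k hk hlo (ehigh hε (by omega) hup)
    subst hKx
    simp only [hvdef]
    rw [dif_neg (show ¬ Nat.find (ex x) = 0 by omega), dif_pos hup]
  have V2 : ∀ (k : ℕ), 1 ≤ k → ∀ (x : X), ε*4^(16*k+11) ≤ dist x x₀ →
      dist x x₀ < ε*4^(16*k+13) →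
      ∀ (hm : x ∈ Annulus x₀ ((ε*4^8)*M^(2*k)) ((ε*4^8)*M^(2*k+1))), v x = gR k ⟨x, hm⟩ := by
    intro k hk x hlo hup hm
    have hKx : Nat.find (ex x) = k := hKeq x k hk (elow hε (by omega) hlo) (ehigh hε (by omega) hup)
    subst hKx
    simp only [hvdef]
    rw [dif_neg (show ¬ Nat.find (ex x) = 0 by omega), dif_neg (not_lt.mpr hlo), dif_pos hup]
  have V3 : ∀ (k : ℕ), 1 ≤ k → ∀ (x : X), ε*4^(16*k+13) ≤ dist x x₀ →
      dist x x₀ < ε*4^(16*k+19) →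
      ∀ (hm : x ∈ Annulus x₀ ((ε*4^12)*M^(2*k)) ((ε*4^12)*M^(2*k+1))), v x = gS k ⟨x, hm⟩ := by
    intro k hk x hlo hup hm
    have hKx : Nat.find (ex x) = k := hKeq x k hk (elow hε (by omega) hlo) (ehigh hε (by omega) hup)
    subst hKx
    simp only [hvdef]
    rw [dif_neg (show ¬ Nat.find (ex x) = 0 by omega),
      dif_neg (not_lt.mpr (elow hε (by omega) hlo)), dif_neg (not_lt.mpr hlo), dif_pos hup]
  have V4 : ∀ (k : ℕ), 1 ≤ k → ∀ (x : X), ε*4^(16*k+19) ≤ dist x x₀ →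
      dist x x₀ < ε*4^(16*k+21) →
      ∀ (hm : x ∈ Annulus x₀ (ε*M^(2*(k+1))) (ε*M^(2*(k+1)+1))), v x = gP (k+1) ⟨x, hm⟩ := by
    intro k hk x hlo hup hm
    have hKx : Nat.find (ex x) = k := hKeq x k hk (elow hε (by omega) hlo) hup
    subst hKx
    simp only [hvdef]
    rw [dif_neg (show ¬ Nat.find (ex x) = 0 by omega),
      dif_neg (not_lt.mpr (elow hε (by omega) hlo)),
      dif_neg (not_lt.mpr (elow hε (by omega) hlo)), dif_neg (not_lt.mpr hlo)]
  ----------------------------------------------------------------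
  -- v agrees with usph on A
  ----------------------------------------------------------------
  have VA : ∀ (x : X), x ∈ A → v x = usph x := by
    intro x hxA
    by_cases h0 : Nat.find (ex x) = 0
    · simp only [hvdef]
      rw [dif_pos h0]
    · have hk1 : 1 ≤ Nat.find (ex x) := by omega
      have hlo := hKlo x h0
      have hup := hKup x
      by_cases hq : dist x x₀ < ε*4^(16*(Nat.find (ex x))+11)
      · have hm : x ∈ Annulus x₀ ((ε*4^4)*M^(2*(Nat.find (ex x)))) ((ε*4^4)*M^(2*(Nat.find (ex x))+1)) :=
          memQ _ x (elow hε (by omega) hlo) (ehigh hε (by omega) hq)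
        rw [V1 (Nat.find (ex x)) hk1 x hlo hq hm]
        by_cases hb1 : dist x x₀ < ε*4^(16*(Nat.find (ex x))+6)
        · have hxAQ : x ∈ AQ (Nat.find (ex x)) := Or.inl ⟨elow hε (by omega) hlo, hb1⟩
          rw [(hgQ (Nat.find (ex x)) hk1).2 x hxAQ hm]
          have hmP : x ∈ Annulus x₀ (ε*M^(2*(Nat.find (ex x)))) (ε*M^(2*(Nat.find (ex x))+1)) :=
            memP _ x (elow hε (by omega) hlo) (ehigh hε (by omega) hb1)
          rw [fQ1 (Nat.find (ex x)) ⟨x, hxAQ⟩ hb1 hmP]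
          exact gPA (Nat.find (ex x)) hk1 x hxA hmP
        · by_cases hb2 : dist x x₀ < ε*4^(16*(Nat.find (ex x))+10)
          · have hxAQ : x ∈ AQ (Nat.find (ex x)) := Or.inr (Or.inl ⟨hxA, not_lt.mp hb1, hb2⟩)
            rw [(hgQ (Nat.find (ex x)) hk1).2 x hxAQ hm]
            exact fQ2 (Nat.find (ex x)) ⟨x, hxAQ⟩ hb1 hb2
          · have hxAQ : x ∈ AQ (Nat.find (ex x)) :=
              Or.inr (Or.inr ⟨not_lt.mp hb2, ehigh hε (by omega) hq⟩)
            rw [(hgQ (Nat.find (ex x)) hk1).2 x hxAQ hm]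
            have hmR : x ∈ Annulus x₀ ((ε*4^8)*M^(2*(Nat.find (ex x)))) ((ε*4^8)*M^(2*(Nat.find (ex x))+1)) :=
              memR _ x (elow hε (by omega) (not_lt.mp hb2)) (ehigh hε (by omega) hq)
            rw [fQ3 (Nat.find (ex x)) ⟨x, hxAQ⟩ hb2 hmR]
            exact gRA (Nat.find (ex x)) hk1 x hxA hmR
      · by_cases hr : dist x x₀ < ε*4^(16*(Nat.find (ex x))+13)
        · have hmR : x ∈ Annulus x₀ ((ε*4^8)*M^(2*(Nat.find (ex x)))) ((ε*4^8)*M^(2*(Nat.find (ex x))+1)) :=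
            memR _ x (elow hε (by omega) (not_lt.mp hq)) (ehigh hε (by omega) hr)
          rw [V2 (Nat.find (ex x)) hk1 x (not_lt.mp hq) hr hmR]
          exact gRA (Nat.find (ex x)) hk1 x hxA hmR
        · by_cases hs2 : dist x x₀ < ε*4^(16*(Nat.find (ex x))+19)
          · have hmS : x ∈ Annulus x₀ ((ε*4^12)*M^(2*(Nat.find (ex x)))) ((ε*4^12)*M^(2*(Nat.find (ex x))+1)) :=
              memS _ x (elow hε (by omega) (not_lt.mp hr)) (ehigh hε (by omega) hs2)
            rw [V3 (Nat.find (ex x)) hk1 x (not_lt.mp hr) hs2 hmS]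
            by_cases hb1 : dist x x₀ < ε*4^(16*(Nat.find (ex x))+14)
            · have hxAS : x ∈ AS (Nat.find (ex x)) := Or.inl ⟨elow hε (by omega) (not_lt.mp hr), hb1⟩
              rw [(hgS (Nat.find (ex x)) hk1).2 x hxAS hmS]
              have hmR : x ∈ Annulus x₀ ((ε*4^8)*M^(2*(Nat.find (ex x)))) ((ε*4^8)*M^(2*(Nat.find (ex x))+1)) :=
                memR _ x (elow hε (by omega) (not_lt.mp hr)) (ehigh hε (by omega) hb1)
              rw [fS1 (Nat.find (ex x)) ⟨x, hxAS⟩ hb1 hmR]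
              exact gRA (Nat.find (ex x)) hk1 x hxA hmR
            · by_cases hb2 : dist x x₀ < ε*4^(16*(Nat.find (ex x))+18)
              · have hxAS : x ∈ AS (Nat.find (ex x)) := Or.inr (Or.inl ⟨hxA, not_lt.mp hb1, hb2⟩)
                rw [(hgS (Nat.find (ex x)) hk1).2 x hxAS hmS]
                exact fS2 (Nat.find (ex x)) ⟨x, hxAS⟩ hb1 hb2
              · have hxAS : x ∈ AS (Nat.find (ex x)) :=
                  Or.inr (Or.inr ⟨not_lt.mp hb2, ehigh hε (by omega) hs2⟩)
                rw [(hgS (Nat.find (ex x)) hk1).2 x hxAS hmS]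
                have hmP : x ∈ Annulus x₀ (ε*M^(2*((Nat.find (ex x))+1))) (ε*M^(2*((Nat.find (ex x))+1)+1)) :=
                  memPk1 (Nat.find (ex x)) x (elow hε (by omega) (not_lt.mp hb2))
                    (ehigh hε (by omega) hs2)
                rw [fS3 (Nat.find (ex x)) ⟨x, hxAS⟩ hb2 hmP]
                exact gPA ((Nat.find (ex x))+1) (by omega) x hxA hmP
          · have hmP : x ∈ Annulus x₀ (ε*M^(2*((Nat.find (ex x))+1))) (ε*M^(2*((Nat.find (ex x))+1)+1)) :=
              memP _ x (elow hε (by omega) (not_lt.mp hs2)) (ehigh hε (by omega) hup)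
            rw [V4 (Nat.find (ex x)) hk1 x (not_lt.mp hs2) hup hmP]
            exact gPA ((Nat.find (ex x))+1) (by omega) x hxA hmP
  ----------------------------------------------------------------
  -- the key local Lipschitz estimate for v
  ----------------------------------------------------------------
  have genP : ∀ (i i' : ℕ), i = i' → ∀ (z : X) (p : z ∈ Annulus x₀ (ε*M^(2*i)) (ε*M^(2*i+1)))
      (p' : z ∈ Annulus x₀ (ε*M^(2*i')) (ε*M^(2*i'+1))), gP i ⟨z,p⟩ = gP i' ⟨z,p'⟩ := by
    rintro i i' rfl z p p'; rfl
  have KeyB : ∀ x y : X, dist x x₀ ≤ dist y x₀ → ε*4^22 ≤ dist y x₀ →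
      dist x y < dist y x₀ / 2 →
      dist (v x) (v y) ≤ ((cP+cR+cQ+cS)*(ε*4^21)) / dist y x₀ * dist x y := by
    intro x y hord hylb hclose
    have hy0 : (0:ℝ) < dist y x₀ := lt_of_lt_of_le (epos 22) hylb
    have hd0 : (0:ℝ) ≤ dist x y := dist_nonneg
    have hsum0 : (0:ℝ) ≤ cP+cR+cQ+cS := by linarith [hcP.le, hcR.le, hcQ.le, hcS.le]
    have hxhalf : dist y x₀ / 2 < dist x x₀ := by
      have htri : dist y x₀ ≤ dist y x + dist x x₀ := dist_triangle y x x₀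
      rw [dist_comm y x] at htri
      linarith
    have hconv : ∀ (k : ℕ) (cw D : ℝ), 0 ≤ cw → cw ≤ cP+cR+cQ+cS →
        dist y x₀ < ε*4^(16*k+21) → D ≤ cw/M^(2*k) * dist x y →
        D ≤ ((cP+cR+cQ+cS)*(ε*4^21))/(dist y x₀) * dist x y := by
      intro k cw D hcw hcwle hyub hD
      refine hD.trans (mul_le_mul_of_nonneg_right ?_ hd0)
      rw [div_le_div_iff₀ (pow_pos hM0 _) hy0]
      have e : (ε*4^21) * M^(2*k) = ε*4^(16*k+21) := by
        rw [hMdef]; exact radform ε 21 (2*k) (16*k+21) (by omega)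
      calc cw * dist y x₀ ≤ (cP+cR+cQ+cS) * (ε*4^(16*k+21)) := by
            have t1 := mul_le_mul_of_nonneg_right hcwle hy0.le
            have t2 := mul_le_mul_of_nonneg_left hyub.le hsum0
            linarith
        _ = (cP+cR+cQ+cS)*(ε*4^21) * M^(2*k) := by rw [mul_assoc, e]
    have hhalf : ∀ (a : ℕ), ε*4^(a+1) ≤ dist y x₀ → ε*4^a < dist x x₀ := by
      intro a ha
      have e : ε*4^(a+1) = (ε*4^a)*4 := by rw [mul_assoc, ← pow_succ]
      rw [e] at ha
      linarith [epos a]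
    have hdouble : ∀ (a : ℕ), dist x x₀ < ε*4^a → dist y x₀ < ε*4^(a+1) := by
      intro a ha
      have e : ε*4^(a+1) = (ε*4^a)*4 := by rw [mul_assoc, ← pow_succ]
      rw [e]
      linarith [epos a]
    have hk1 : 1 ≤ Nat.find (ex y) := by
      by_contra hcon
      have h0 : Nat.find (ex y) = 0 := by omega
      have h2 := hKup y
      rw [h0] at h2
      have h3 : dist y x₀ < ε*4^(21:ℕ) := by
        refine lt_of_lt_of_le h2 (le_of_eq ?_)
        norm_num
      have h4 : ε*4^(21:ℕ) ≤ ε*4^(22:ℕ) := by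
        have := fp_mono (show (21:ℕ) ≤ 22 by omega)
        nlinarith
      linarith
    have hylo : ε*4^(16*(Nat.find (ex y))+5) ≤ dist y x₀ := hKlo y (by omega)
    have hyup := hKup y
    have hsumle : ∀ cw : ℝ, cw = cP ∨ cw = cR ∨ cw = cQ ∨ cw = cS → cw ≤ cP+cR+cQ+cS := by
      intro cw hcw
      rcases hcw with rfl | rfl | rfl | rfl <;> linarith [hcP.le, hcR.le, hcQ.le, hcS.le]
    by_cases hqy : dist y x₀ < ε*4^(16*(Nat.find (ex y))+11)
    · have hmy : y ∈ Annulus x₀ ((ε*4^4)*M^(2*(Nat.find (ex y)))) ((ε*4^4)*M^(2*(Nat.find (ex y))+1)) :=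
        memQ _ y (elow hε (by omega) hylo) (ehigh hε (by omega) hqy)
      rw [V1 (Nat.find (ex y)) hk1 y hylo hqy hmy]
      by_cases hxq : ε*4^(16*(Nat.find (ex y))+5) ≤ dist x x₀
      · have hxq2 : dist x x₀ < ε*4^(16*(Nat.find (ex y))+11) := lt_of_le_of_lt hord hqy
        have hmx : x ∈ Annulus x₀ ((ε*4^4)*M^(2*(Nat.find (ex y)))) ((ε*4^4)*M^(2*(Nat.find (ex y))+1)) :=
          memQ _ x (elow hε (by omega) hxq) (ehigh hε (by omega) hxq2)
        rw [V1 (Nat.find (ex y)) hk1 x hxq hxq2 hmx]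
        exact hconv (Nat.find (ex y)) cQ _ hcQ.le (hsumle cQ (by tauto)) hyup
          ((hgQ (Nat.find (ex y)) hk1).1 ⟨x,hmx⟩ ⟨y,hmy⟩)
      · have hxlt : dist x x₀ < ε*4^(16*(Nat.find (ex y))+5) := not_le.mp hxq
        have hxgt : ε*4^(16*(Nat.find (ex y))+4) < dist x x₀ := hhalf _ (elow hε (by omega) hylo)
        have hyub6 : dist y x₀ < ε*4^(16*(Nat.find (ex y))+5+1) := hdouble _ hxlt
        have hk2 : 2 ≤ Nat.find (ex y) := by
          by_contra hcon
          have h1 : Nat.find (ex y) = 1 := by omega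
          rw [h1] at hyub6
          have h3 : dist y x₀ < ε*4^(22:ℕ) := by
            refine lt_of_lt_of_le hyub6 (le_of_eq ?_)
            norm_num
          linarith
        have hmx' : x ∈ Annulus x₀ (ε*M^(2*((Nat.find (ex y) - 1)+1))) (ε*M^(2*((Nat.find (ex y) - 1)+1)+1)) :=
          memP ((Nat.find (ex y) - 1)+1) x (elow hε (by omega) hxgt.le) (ehigh hε (by omega) hxlt)
        rw [V4 (Nat.find (ex y) - 1) (by omega) x
          (elow hε (by omega) hxgt.le) (ehigh hε (by omega) hxlt) hmx']
        have hmxP : x ∈ Annulus x₀ (ε*M^(2*(Nat.find (ex y)))) (ε*M^(2*(Nat.find (ex y))+1)) :=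
          memP (Nat.find (ex y)) x (elow hε (by omega) hxgt.le) (ehigh hε (by omega) hxlt)
        rw [genP ((Nat.find (ex y) - 1)+1) (Nat.find (ex y)) (by omega) x hmx' hmxP]
        have hyAQ : y ∈ AQ (Nat.find (ex y)) :=
          Or.inl ⟨elow hε (by omega) hylo, ehigh hε (by omega) hyub6⟩
        rw [(hgQ (Nat.find (ex y)) hk1).2 y hyAQ hmy]
        have hmyP : y ∈ Annulus x₀ (ε*M^(2*(Nat.find (ex y)))) (ε*M^(2*(Nat.find (ex y))+1)) :=
          memP (Nat.find (ex y)) y (elow hε (by omega) hylo) (ehigh hε (by omega) hyub6)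
        rw [fQ1 (Nat.find (ex y)) ⟨y,hyAQ⟩ (ehigh hε (by omega) hyub6) hmyP]
        exact hconv (Nat.find (ex y)) cP _ hcP.le (hsumle cP (by tauto)) hyup
          ((hgP (Nat.find (ex y)) hk1).1 ⟨x,hmxP⟩ ⟨y,hmyP⟩)
    · by_cases hry : dist y x₀ < ε*4^(16*(Nat.find (ex y))+13)
      · have hylo11 : ε*4^(16*(Nat.find (ex y))+11) ≤ dist y x₀ := not_lt.mp hqy
        have hmy : y ∈ Annulus x₀ ((ε*4^8)*M^(2*(Nat.find (ex y)))) ((ε*4^8)*M^(2*(Nat.find (ex y))+1)) :=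
          memR _ y (elow hε (by omega) hylo11) (ehigh hε (by omega) hry)
        rw [V2 (Nat.find (ex y)) hk1 y hylo11 hry hmy]
        by_cases hxq : ε*4^(16*(Nat.find (ex y))+11) ≤ dist x x₀
        · have hxq2 : dist x x₀ < ε*4^(16*(Nat.find (ex y))+13) := lt_of_le_of_lt hord hry
          have hmx : x ∈ Annulus x₀ ((ε*4^8)*M^(2*(Nat.find (ex y)))) ((ε*4^8)*M^(2*(Nat.find (ex y))+1)) :=
            memR _ x (elow hε (by omega) hxq) (ehigh hε (by omega) hxq2)
          rw [V2 (Nat.find (ex y)) hk1 x hxq hxq2 hmx]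
          exact hconv (Nat.find (ex y)) cR _ hcR.le (hsumle cR (by tauto)) hyup
            ((hgR (Nat.find (ex y)) hk1).1 ⟨x,hmx⟩ ⟨y,hmy⟩)
        · have hxlt : dist x x₀ < ε*4^(16*(Nat.find (ex y))+11) := not_le.mp hxq
          have hxgt : ε*4^(16*(Nat.find (ex y))+10) < dist x x₀ := hhalf _ (elow hε (by omega) hylo11)
          have hmxQ : x ∈ Annulus x₀ ((ε*4^4)*M^(2*(Nat.find (ex y)))) ((ε*4^4)*M^(2*(Nat.find (ex y))+1)) :=
            memQ _ x (elow hε (by omega) hxgt.le) (ehigh hε (by omega) hxlt)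
          rw [V1 (Nat.find (ex y)) hk1 x (elow hε (by omega) hxgt.le) hxlt hmxQ]
          have hxAQ : x ∈ AQ (Nat.find (ex y)) :=
            Or.inr (Or.inr ⟨hxgt.le, ehigh hε (by omega) hxlt⟩)
          rw [(hgQ (Nat.find (ex y)) hk1).2 x hxAQ hmxQ]
          have hmxR : x ∈ Annulus x₀ ((ε*4^8)*M^(2*(Nat.find (ex y)))) ((ε*4^8)*M^(2*(Nat.find (ex y))+1)) :=
            memR _ x (elow hε (by omega) hxgt.le) (ehigh hε (by omega) hxlt)
          rw [fQ3 (Nat.find (ex y)) ⟨x,hxAQ⟩ (not_lt.mpr hxgt.le) hmxR]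
          exact hconv (Nat.find (ex y)) cR _ hcR.le (hsumle cR (by tauto)) hyup
            ((hgR (Nat.find (ex y)) hk1).1 ⟨x,hmxR⟩ ⟨y,hmy⟩)
      · by_cases hsy : dist y x₀ < ε*4^(16*(Nat.find (ex y))+19)
        · have hylo13 : ε*4^(16*(Nat.find (ex y))+13) ≤ dist y x₀ := not_lt.mp hry
          have hmy : y ∈ Annulus x₀ ((ε*4^12)*M^(2*(Nat.find (ex y)))) ((ε*4^12)*M^(2*(Nat.find (ex y))+1)) :=
            memS _ y (elow hε (by omega) hylo13) (ehigh hε (by omega) hsy)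
          rw [V3 (Nat.find (ex y)) hk1 y hylo13 hsy hmy]
          by_cases hxq : ε*4^(16*(Nat.find (ex y))+13) ≤ dist x x₀
          · have hxq2 : dist x x₀ < ε*4^(16*(Nat.find (ex y))+19) := lt_of_le_of_lt hord hsy
            have hmx : x ∈ Annulus x₀ ((ε*4^12)*M^(2*(Nat.find (ex y)))) ((ε*4^12)*M^(2*(Nat.find (ex y))+1)) :=
              memS _ x (elow hε (by omega) hxq) (ehigh hε (by omega) hxq2)
            rw [V3 (Nat.find (ex y)) hk1 x hxq hxq2 hmx]
            exact hconv (Nat.find (ex y)) cS _ hcS.le (hsumle cS (by tauto)) hyup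
              ((hgS (Nat.find (ex y)) hk1).1 ⟨x,hmx⟩ ⟨y,hmy⟩)
          · have hxlt : dist x x₀ < ε*4^(16*(Nat.find (ex y))+13) := not_le.mp hxq
            have hxgt : ε*4^(16*(Nat.find (ex y))+12) < dist x x₀ := hhalf _ (elow hε (by omega) hylo13)
            have hmxR : x ∈ Annulus x₀ ((ε*4^8)*M^(2*(Nat.find (ex y)))) ((ε*4^8)*M^(2*(Nat.find (ex y))+1)) :=
              memR _ x (elow hε (by omega) hxgt.le) (ehigh hε (by omega) hxlt)
            rw [V2 (Nat.find (ex y)) hk1 x (elow hε (by omega) hxgt.le) hxlt hmxR]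
            have hyub14 : dist y x₀ < ε*4^(16*(Nat.find (ex y))+13+1) := hdouble _ hxlt
            have hyAS : y ∈ AS (Nat.find (ex y)) :=
              Or.inl ⟨elow hε (by omega) hylo13, ehigh hε (by omega) hyub14⟩
            rw [(hgS (Nat.find (ex y)) hk1).2 y hyAS hmy]
            have hmyR : y ∈ Annulus x₀ ((ε*4^8)*M^(2*(Nat.find (ex y)))) ((ε*4^8)*M^(2*(Nat.find (ex y))+1)) :=
              memR _ y (elow hε (by omega) hylo13) (ehigh hε (by omega) hyub14)
            rw [fS1 (Nat.find (ex y)) ⟨y,hyAS⟩ (ehigh hε (by omega) hyub14) hmyR]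
            exact hconv (Nat.find (ex y)) cR _ hcR.le (hsumle cR (by tauto)) hyup
              ((hgR (Nat.find (ex y)) hk1).1 ⟨x,hmxR⟩ ⟨y,hmyR⟩)
        · have hylo19 : ε*4^(16*(Nat.find (ex y))+19) ≤ dist y x₀ := not_lt.mp hsy
          have hmy : y ∈ Annulus x₀ (ε*M^(2*((Nat.find (ex y))+1))) (ε*M^(2*((Nat.find (ex y))+1)+1)) :=
            memP _ y (elow hε (by omega) hylo19) (ehigh hε (by omega) hyup)
          rw [V4 (Nat.find (ex y)) hk1 y hylo19 hyup hmy]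
          by_cases hxq : ε*4^(16*(Nat.find (ex y))+19) ≤ dist x x₀
          · have hxup : dist x x₀ < ε*4^(16*(Nat.find (ex y))+21) := lt_of_le_of_lt hord hyup
            have hmx : x ∈ Annulus x₀ (ε*M^(2*((Nat.find (ex y))+1))) (ε*M^(2*((Nat.find (ex y))+1)+1)) :=
              memP _ x (elow hε (by omega) hxq) (ehigh hε (by omega) hxup)
            rw [V4 (Nat.find (ex y)) hk1 x hxq hxup hmx]
            refine hconv (Nat.find (ex y)) cP _ hcP.le (hsumle cP (by tauto)) hyup ?_
            refine le_trans ((hgP ((Nat.find (ex y))+1) (by omega)).1 ⟨x,hmx⟩ ⟨y,hmy⟩) ?_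
            exact mul_le_mul_of_nonneg_right (hshift (Nat.find (ex y)) cP hcP.le) hd0
          · have hxlt : dist x x₀ < ε*4^(16*(Nat.find (ex y))+19) := not_le.mp hxq
            have hxgt : ε*4^(16*(Nat.find (ex y))+18) < dist x x₀ := hhalf _ (elow hε (by omega) hylo19)
            have hmxS : x ∈ Annulus x₀ ((ε*4^12)*M^(2*(Nat.find (ex y)))) ((ε*4^12)*M^(2*(Nat.find (ex y))+1)) :=
              memS _ x (elow hε (by omega) hxgt.le) (ehigh hε (by omega) hxlt)
            rw [V3 (Nat.find (ex y)) hk1 x (elow hε (by omega) hxgt.le) hxlt hmxS]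
            have hxAS : x ∈ AS (Nat.find (ex y)) :=
              Or.inr (Or.inr ⟨hxgt.le, ehigh hε (by omega) hxlt⟩)
            rw [(hgS (Nat.find (ex y)) hk1).2 x hxAS hmxS]
            have hmxP : x ∈ Annulus x₀ (ε*M^(2*((Nat.find (ex y))+1))) (ε*M^(2*((Nat.find (ex y))+1)+1)) :=
              memPk1 (Nat.find (ex y)) x (elow hε (by omega) hxgt.le) (ehigh hε (by omega) hxlt)
            rw [fS3 (Nat.find (ex y)) ⟨x,hxAS⟩ (not_lt.mpr hxgt.le) hmxP]
            refine hconv (Nat.find (ex y)) cP _ hcP.le (hsumle cP (by tauto)) hyup ?_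
            refine le_trans ((hgP ((Nat.find (ex y))+1) (by omega)).1 ⟨x,hmxP⟩ ⟨y,hmy⟩) ?_
            exact mul_le_mul_of_nonneg_right (hshift (Nat.find (ex y)) cP hcP.le) hd0
  ----------------------------------------------------------------
  -- the final extension
  ----------------------------------------------------------------
  set F : X → EuclideanSpace ℝ (Fin (m+1)) :=
    fun x => dist x x₀ • (v x : EuclideanSpace ℝ (Fin (m+1))) with hFdef
  have hsum0 : (0:ℝ) ≤ cP+cR+cQ+cS := by linarith [hcP.le, hcR.le, hcQ.le, hcS.le]
  have hs0 : (0:ℝ) ≤ (cP+cR+cQ+cS)*(ε*4^21) := mul_nonneg hsum0 (epos 21).le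
  have hmain : ∀ x y : X, x ≠ y → dist x x₀ ≤ dist y x₀ →
      dist (F x) (F y) ≤ ((4*(ε*4^22)/ε + 1) + 5 + (((cP+cR+cQ+cS)*(ε*4^21)) + 1)) * dist x y := by
    intro x y hne hord
    have hd := hsep x y hne
    have hd0 : (0:ℝ) < dist x y := lt_of_lt_of_le hε hd
    have hxn : (0:ℝ) ≤ dist x x₀ := dist_nonneg
    have hyn : (0:ℝ) ≤ dist y x₀ := dist_nonneg
    have hA0 : (0:ℝ) ≤ 4*(ε*4^22)/ε := by positivity
    have hsplit : dist (F x) (F y) ≤ dist x x₀ * dist (v x) (v y) + dist x y := by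
      simp only [hFdef]
      rw [dist_eq_norm]
      have e : dist x x₀ • (v x : EuclideanSpace ℝ (Fin (m+1)))
          - dist y x₀ • (v y : EuclideanSpace ℝ (Fin (m+1)))
          = dist x x₀ • ((v x : EuclideanSpace ℝ (Fin (m+1))) - (v y : EuclideanSpace ℝ (Fin (m+1))))
            + (dist x x₀ - dist y x₀) • (v y : EuclideanSpace ℝ (Fin (m+1))) := by
        rw [smul_sub, sub_smul]; abel
      rw [e]
      refine (norm_add_le _ _).trans ?_
      rw [norm_smul, norm_smul, Real.norm_eq_abs, Real.norm_eq_abs, abs_of_nonneg hxn,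
        sphnorm, mul_one]
      exact add_le_add (le_of_eq (by rw [sphdist])) (abs_dist_sub_le _ _ _)
    by_cases hlow : dist x x₀ ≤ 2*(ε*4^22)
    · have h2 : dist (v x) (v y) ≤ 2 := sphdist2 _ _
      have hb1 : dist (F x) (F y) ≤ 2*(2*(ε*4^22)) + dist x y := by
        refine hsplit.trans ?_
        have := mul_le_mul hlow h2 dist_nonneg (by positivity)
        linarith
      have h3 : 4*(ε*4^22) ≤ (4*(ε*4^22)/ε) * dist x y := by
        rw [div_mul_eq_mul_div, le_div_iff₀ hε]
        exact mul_le_mul_of_nonneg_left hd (by positivity)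
      nlinarith [hd0.le, hs0]
    · by_cases hclose : dist x y < dist y x₀ / 2
      · have hylb : ε*4^22 ≤ dist y x₀ := by
          have := not_le.mp hlow
          linarith [(epos 22).le]
        have hK := KeyB x y hord hylb hclose
        have hyp : (0:ℝ) < dist y x₀ := lt_of_lt_of_le (epos 22) hylb
        have h5 : dist x x₀ * dist (v x) (v y) ≤ ((cP+cR+cQ+cS)*(ε*4^21)) * dist x y := by
          have h6 : dist x x₀ * dist (v x) (v y)
              ≤ dist x x₀ * (((cP+cR+cQ+cS)*(ε*4^21))/dist y x₀ * dist x y) :=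
            mul_le_mul_of_nonneg_left hK hxn
          refine h6.trans ?_
          have e : dist x x₀ * (((cP+cR+cQ+cS)*(ε*4^21))/dist y x₀ * dist x y)
              = ((cP+cR+cQ+cS)*(ε*4^21)) * dist x y * (dist x x₀ / dist y x₀) := by
            field_simp
          rw [e]
          have hle1 : dist x x₀ / dist y x₀ ≤ 1 := (div_le_one hyp).mpr hord
          have hCd : (0:ℝ) ≤ ((cP+cR+cQ+cS)*(ε*4^21)) * dist x y := mul_nonneg hs0 hd0.le
          nlinarith
        refine hsplit.trans ?_
        nlinarith [hd0.le]
      · have hfar2 : dist y x₀ ≤ 2*dist x y := by linarith [not_lt.mp hclose]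
        have h2 : dist (v x) (v y) ≤ 2 := sphdist2 _ _
        have hb1 : dist (F x) (F y) ≤ 2*dist y x₀ + dist x y := by
          refine hsplit.trans ?_
          have := mul_le_mul hord h2 dist_nonneg hyn
          linarith
        nlinarith [hd0.le, hs0, hA0]
  refine ⟨F, ?_, ?_, ?_⟩
  · intro a
    simp only [hFdef]
    by_cases h0 : dist (a:X) x₀ = 0
    · have hfa : ‖f a‖ = 0 := by rw [hnorm a, h0]
      rw [h0, zero_smul]
      exact (norm_eq_zero.mp hfa).symm
    · rw [VA (a:X) a.2, husA (a:X) a.2 h0, smul_smul, mul_inv_cancel₀ h0, one_smul]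
  · intro x
    simp only [hFdef]
    rw [norm_smul, Real.norm_eq_abs, abs_of_nonneg dist_nonneg, sphnorm, mul_one]
  · refine ⟨(4*(ε*4^22)/ε + 1) + 5 + (((cP+cR+cQ+cS)*(ε*4^21)) + 1), ?_, ?_⟩
    · have hA0 : (0:ℝ) ≤ 4*(ε*4^22)/ε := by positivity
      linarith
    · intro x y
      by_cases hne : x = y
      · subst hne
        rw [dist_self, dist_self, mul_zero]
      · rcases le_total (dist x x₀) (dist y x₀) with hord | hord
        · exact hmain x y hne hord
        · rw [dist_comm (F x) (F y), dist_comm x y]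
          exact hmain y x (fun h => hne h.symm) hord




lemma lemAB (x₀ : X) (m : ℕ) (ha : PropA x₀ m) : PropB x₀ m := by
  intro r s M hr hs hM A hA f hf
  classical
  have hM0 : (0:ℝ) < M := lt_trans one_pos hM
  have hM1 : (1:ℝ) ≤ M := hM.le
  have hdisjaux : ∀ (x : X) (k l : ℕ), 1 ≤ k → 1 ≤ l → k < l → x ∈ A k → x ∈ A l → False := by
    intro x k l hk hl hkl hxk hxl
    have h1 : dist x x₀ < r * M^(2*k+1) := (hA k hk hxk).2
    have h2 : r * M^(2*l) ≤ dist x x₀ := (hA l hl hxl).1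
    have h3 : r*M^(2*k+1) ≤ r*M^(2*l) := by
      apply mul_le_mul_of_nonneg_left (pow_le_pow_right₀ hM1 (by omega)) hr.le
    linarith
  have hdisj : ∀ (x : X) (k l : ℕ), 1 ≤ k → 1 ≤ l → x ∈ A k → x ∈ A l → k = l := by
    intro x k l hk hl hxk hxl
    by_contra hne
    rcases lt_or_gt_of_ne hne with h | h
    · exact hdisjaux x k l hk hl h hxk hxl
    · exact hdisjaux x l k hl hk h hxl hxk
  have fcongr : ∀ (i j : ℕ) (h : i = j) (z : X) (hz : z ∈ A i) (hz' : z ∈ A j),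
      (f i ⟨z,hz⟩ : EuclideanSpace ℝ (Fin (m+1))) = f j ⟨z,hz'⟩ := by
    rintro i j rfl z hz hz'; rfl
  set At : Set X := {x | ∃ k, 1 ≤ k ∧ x ∈ A k} with hAtdef
  have pick : ∀ x : At, ∃ k, 1 ≤ k ∧ (x:X) ∈ A k := fun x => x.2
  set kf : At → ℕ := fun x => (pick x).choose with hkf
  have hkf1 : ∀ x : At, 1 ≤ kf x := fun x => (pick x).choose_spec.1
  have hkfm : ∀ x : At, (x:X) ∈ A (kf x) := fun x => (pick x).choose_spec.2
  set ft : At → EuclideanSpace ℝ (Fin (m+1)) :=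
    fun x => dist (x:X) x₀ • (f (kf x) ⟨(x:X), hkfm x⟩ : EuclideanSpace ℝ (Fin (m+1))) with hft
  have hftnorm : ∀ x : At, ‖ft x‖ = dist (x:X) x₀ := by
    intro x
    rw [hft]
    simp only
    rw [norm_smul, Real.norm_eq_abs, abs_of_nonneg dist_nonneg, sphnorm, mul_one]
  set lam : ℝ := (1 + r*s*M) + 2*M/(M-1) with hlam
  have hlam0 : 0 ≤ lam := by
    rw [hlam]
    have h1 : (0:ℝ) ≤ 1 + r*s*M := by positivity
    have h2 : (0:ℝ) ≤ 2*M/(M-1) := div_nonneg (by linarith) (by linarith)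
    linarith
  have hbound : ∀ x y : At, kf x ≤ kf y →
      dist (ft x) (ft y) ≤ lam * dist (x:X) (y:X) := by
    intro x y hkl
    have hdxy : |dist (x:X) x₀ - dist (y:X) x₀| ≤ dist (x:X) (y:X) := abs_dist_sub_le _ _ _
    have hd0 : (0:ℝ) ≤ dist (x:X) (y:X) := dist_nonneg
    rcases eq_or_lt_of_le hkl with he | hlt
    · -- same index
      have hy' : (y:X) ∈ A (kf x) := he ▸ hkfm y
      have hq : (f (kf y) ⟨(y:X), hkfm y⟩ : EuclideanSpace ℝ (Fin (m+1)))
          = f (kf x) ⟨(y:X), hy'⟩ := fcongr _ _ he.symm _ _ _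
      rw [dist_eq_norm, hft]
      simp only
      rw [hq]
      set p := (f (kf x) ⟨(x:X), hkfm x⟩ : EuclideanSpace ℝ (Fin (m+1))) with hp
      set q := (f (kf x) ⟨(y:X), hy'⟩ : EuclideanSpace ℝ (Fin (m+1))) with hqq
      have hsplit : ‖dist (x:X) x₀ • p - dist (y:X) x₀ • q‖ ≤
          |dist (x:X) x₀ - dist (y:X) x₀| * ‖p‖ + dist (y:X) x₀ * ‖p - q‖ := by
        have e : dist (x:X) x₀ • p - dist (y:X) x₀ • q
            = (dist (x:X) x₀ - dist (y:X) x₀) • p + dist (y:X) x₀ • (p - q) := by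
          rw [sub_smul, smul_sub]; abel
        rw [e]
        refine (norm_add_le _ _).trans ?_
        rw [norm_smul, norm_smul, Real.norm_eq_abs, Real.norm_eq_abs,
          abs_of_nonneg (dist_nonneg : (0:ℝ) ≤ dist (y:X) x₀)]
      have hpn : ‖p‖ = 1 := sphnorm _
      have hpq : ‖p - q‖ ≤ s/M^(2*kf x) * dist (x:X) (y:X) := by
        have := hf (kf x) (hkf1 x) ⟨(x:X), hkfm x⟩ ⟨(y:X), hy'⟩
        rw [sphdist] at this
        exact this
      have hyub : dist (y:X) x₀ < r*M^(2*kf x+1) := (hA _ (hkf1 x) hy').2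
      have hMk : (0:ℝ) < M^(2*kf x) := pow_pos hM0 _
      have hs2 : (0:ℝ) ≤ s/M^(2*kf x) := by positivity
      have key2 : dist (y:X) x₀ * ‖p - q‖ ≤ r*s*M * dist (x:X) (y:X) := by
        have e1 : dist (y:X) x₀ * ‖p - q‖ ≤ (r*M^(2*kf x+1)) * (s/M^(2*kf x) * dist (x:X) (y:X)) := by
          apply mul_le_mul hyub.le hpq (norm_nonneg _) (by positivity)
        refine e1.trans (le_of_eq ?_)
        rw [pow_succ]
        field_simp
      calc ‖dist (x:X) x₀ • p - dist (y:X) x₀ • q‖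
          ≤ |dist (x:X) x₀ - dist (y:X) x₀| * ‖p‖ + dist (y:X) x₀ * ‖p - q‖ := hsplit
        _ ≤ dist (x:X) (y:X) * 1 + r*s*M * dist (x:X) (y:X) := by
            rw [hpn]
            exact add_le_add (by nlinarith) key2
        _ ≤ lam * dist (x:X) (y:X) := by
            rw [hlam]
            have h2 : (0:ℝ) ≤ 2*M/(M-1) := div_nonneg (by linarith) (by linarith)
            nlinarith
    · -- different indices
      have hxub : dist (x:X) x₀ < r*M^(2*kf x+1) := (hA _ (hkf1 x) (hkfm x)).2
      have hylb : r*M^(2*kf y) ≤ dist (y:X) x₀ := (hA _ (hkf1 y) (hkfm y)).1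
      have hstep : r*M^(2*kf x+1) * M ≤ r*M^(2*kf y) := by
        have e : r*M^(2*kf x+1)*M = r*M^(2*kf x+2) := by rw [pow_succ]; ring
        rw [e]
        apply mul_le_mul_of_nonneg_left (pow_le_pow_right₀ hM1 (by omega)) hr.le
      have hxle : M * dist (x:X) x₀ ≤ dist (y:X) x₀ := by nlinarith
      have hd1 : dist (y:X) x₀ - dist (x:X) x₀ ≤ dist (x:X) (y:X) := by
        have h := abs_dist_sub_le (y:X) (x:X) x₀
        rw [dist_comm (y:X) (x:X)] at h
        have := le_abs_self (dist (y:X) x₀ - dist (x:X) x₀)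
        linarith
      have hnorm2 : dist (ft x) (ft y) ≤ dist (x:X) x₀ + dist (y:X) x₀ := by
        rw [dist_eq_norm]
        calc ‖ft x - ft y‖ ≤ ‖ft x‖ + ‖ft y‖ := norm_sub_le _ _
          _ = dist (x:X) x₀ + dist (y:X) x₀ := by rw [hftnorm, hftnorm]
      have hx0 : (0:ℝ) ≤ dist (x:X) x₀ := dist_nonneg
      have hy0 : (0:ℝ) ≤ dist (y:X) x₀ := dist_nonneg
      have hMd : dist (y:X) x₀ * (M-1) ≤ M * dist (x:X) (y:X) := by nlinarith
      -- 2|y| ≤ (2M/(M-1)) d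
      have hC : 2*M/(M-1)*(M-1) = 2*M :=
        div_mul_cancel₀ (2*M) (show M-1 ≠ 0 by intro h; nlinarith [h])
      have hgoal2 : dist (x:X) x₀ + dist (y:X) x₀ ≤ 2*M/(M-1) * dist (x:X) (y:X) := by
        have hM1' : (0:ℝ) < M - 1 := by linarith
        have h2y : dist (x:X) x₀ + dist (y:X) x₀ ≤ 2 * dist (y:X) x₀ := by nlinarith
        refine h2y.trans ?_
        rw [← sub_nonneg]
        have expand : 2*M/(M-1) * dist (x:X) (y:X) - 2*dist (y:X) x₀
            = (2*(M * dist (x:X) (y:X)) - 2*(dist (y:X) x₀ * (M-1))) / (M-1) := by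
          field_simp
        rw [expand]
        apply div_nonneg _ hM1'.le
        linarith
      have hrs : (0:ℝ) ≤ (1 + r*s*M) := by positivity
      calc dist (ft x) (ft y) ≤ dist (x:X) x₀ + dist (y:X) x₀ := hnorm2
        _ ≤ 2*M/(M-1) * dist (x:X) (y:X) := hgoal2
        _ ≤ lam * dist (x:X) (y:X) := by rw [hlam]; nlinarith
  have hftlip : ∀ x y : At, dist (ft x) (ft y) ≤ lam * dist (x:X) (y:X) := by
    intro x y
    rcases le_total (kf x) (kf y) with h | h
    · exact hbound x y h
    · rw [dist_comm, dist_comm (x:X) (y:X)]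
      exact hbound y x h
  obtain ⟨F, hFext, hFnorm, L, hL0, hFlip⟩ :=
    ha At ft hftnorm ⟨lam, hlam0, fun x y => by rw [Subtype.dist_eq x y]; exact hftlip x y⟩
  refine ⟨(L+1)/r, by positivity, ?_⟩
  have hdpos : ∀ (k : ℕ) (x : X), x ∈ Annulus x₀ (r * M ^ (2*k)) (r * M ^ (2*k+1)) →
      0 < dist x x₀ := by
    intro k x hx
    have : (0:ℝ) < r * M^(2*k) := by positivity
    exact lt_of_lt_of_le this hx.1
  refine ⟨fun k x => ⟨(dist (x:X) x₀)⁻¹ • F (x:X), ?_⟩, ?_⟩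
  · rw [mem_sphere_zero_iff_norm, norm_smul, Real.norm_eq_abs, abs_inv,
      abs_of_pos (hdpos k x x.2), hFnorm, inv_mul_cancel₀ (hdpos k x x.2).ne']
  intro k hk
  constructor
  · intro x y
    rw [sphdist]
    simp only
    rw [div_div]
    have hxd := hdpos k x x.2
    have hyd := hdpos k y y.2
    exact dirlem (hFnorm (x:X)) (hFnorm (y:X)) x.2.1 y.2.1 (by positivity) hL0
      (by rw [← dist_eq_norm]; exact hFlip (x:X) (y:X)) (abs_dist_sub_le _ _ _) dist_nonneg
  · intro x hAk hAn
    apply Subtype.ext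
    have hmem : x ∈ At := ⟨k, hk, hAk⟩
    have hFx : F x = ft ⟨x, hmem⟩ := hFext ⟨x, hmem⟩
    show (dist x x₀)⁻¹ • F x = (f k ⟨x,hAk⟩ : EuclideanSpace ℝ (Fin (m+1)))
    rw [hFx, hft]
    simp only
    have hne : dist x x₀ ≠ 0 := (hdpos k x hAn).ne'
    rw [smul_smul, inv_mul_cancel₀ hne, one_smul]
    exact fcongr _ _ (hdisj x _ k (hkf1 ⟨x,hmem⟩) hk (hkfm ⟨x,hmem⟩) hAk) x _ hAk


lemma lemCB (x₀ : X) (m : ℕ) (hc : PropC x₀ m) : PropB x₀ m := by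
  intro r s M hr hs hM A hA f hf
  classical
  set A' : ℕ → Set X := fun k => if k % 2 = 0 then A (k/2) else ∅ with hA'
  have memA : ∀ (k : ℕ), k % 2 = 0 → ∀ x : X, x ∈ A' k → x ∈ A (k/2) := by
    intro k h x hx
    have hx' : x ∈ (if k % 2 = 0 then A (k/2) else (∅:Set X)) := hx
    rwa [if_pos h] at hx'
  have memAodd : ∀ (k : ℕ), ¬(k % 2 = 0) → ∀ x : X, x ∈ A' k → False := by
    intro k h x hx
    have hx' : x ∈ (if k % 2 = 0 then A (k/2) else (∅:Set X)) := hx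
    rw [if_neg h] at hx'
    exact hx'
  have memA' : ∀ (k : ℕ), ∀ x : X, x ∈ A k → x ∈ A' (2*k) := by
    intro k x hx
    show x ∈ (if (2*k) % 2 = 0 then A ((2*k)/2) else (∅:Set X))
    rw [if_pos (by omega), (show (2*k)/2 = k by omega)]
    exact hx
  have hA'sub : ∀ k : ℕ, 1 ≤ k → A' k ⊆ Annulus x₀ (r * M ^ k) (r * M ^ (k+1)) := by
    intro k hk x hx
    by_cases h : k % 2 = 0
    · have hx2 := memA k h x hx
      obtain ⟨j, rfl⟩ : ∃ j, k = 2*j := ⟨k/2, by omega⟩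
      rw [(show (2*j)/2 = j by omega)] at hx2
      exact hA j (by omega) hx2
    · exact absurd hx (fun hh => memAodd k h x hh)
  set f' : (k : ℕ) → (A' k) → Metric.sphere (0 : EuclideanSpace ℝ (Fin (m+1))) 1 :=
    fun k x => if h : k % 2 = 0 then f (k/2) ⟨x.1, memA k h x.1 x.2⟩
      else absurd x.2 (fun hh => memAodd k h x.1 hh) with hf'
  have hf'lip : ∀ k : ℕ, 1 ≤ k → ∀ x y : A' k,
      dist (f' k x) (f' k y) ≤ s / M ^ k * dist (x:X) (y:X) := by
    intro k hk x y
    by_cases h : k % 2 = 0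
    · simp only [hf']
      rw [dif_pos h, dif_pos h]
      obtain ⟨j, rfl⟩ : ∃ j, k = 2*j := ⟨k/2, by omega⟩
      have := hf ((2*j)/2) (by omega) ⟨x.1, memA _ h x.1 x.2⟩ ⟨y.1, memA _ h y.1 y.2⟩
      rw [(show 2*((2*j)/2) = 2*j by omega)] at this
      exact this
    · exact absurd x.2 (fun hh => memAodd k h x.1 hh)
  obtain ⟨c, hc0, g', hg'⟩ := hc r s M hr hs hM A' hA'sub f' hf'lip
  refine ⟨c, hc0, fun k => g' (2*k), ?_⟩
  intro k hk
  obtain ⟨hlip, hext⟩ := hg' (2*k) (by omega)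
  constructor
  · exact hlip
  · intro x hAk hAn
    have hA'k : x ∈ A' (2*k) := memA' k x hAk
    have h2 := hext x hA'k hAn
    show g' (2*k) ⟨x, hAn⟩ = f k ⟨x, hAk⟩
    rw [h2]
    show f' (2*k) ⟨x, hA'k⟩ = f k ⟨x, hAk⟩
    simp only [hf']
    rw [dif_pos (show (2*k) % 2 = 0 by omega)]
    have gen : ∀ (i : ℕ) (hi : i = k) (p : x ∈ A i), f i ⟨x,p⟩ = f k ⟨x,hAk⟩ := by
      rintro i rfl p; rfl
    exact gen _ (by omega) _

lemma lemBC (x₀ : X) (m : ℕ) (hb : PropB x₀ m) : PropC x₀ m := by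
  intro r s M hr hs hM A hA f hf
  classical
  have hM0 : (0:ℝ) < M := lt_trans one_pos hM
  have hMne : M ≠ 0 := hM0.ne'
  obtain ⟨c₁, hc₁, g₁, hg₁⟩ := hb r s M hr hs hM (fun k => A (2*k))
    (fun k hk => hA (2*k) (by omega)) (fun k => f (2*k))
    (fun k hk x y => hf (2*k) (by omega) x y)
  -- odd part
  have hsub2 : ∀ k : ℕ, 1 ≤ k → A (2*k-1) ⊆ Annulus x₀ ((r/M) * M^(2*k)) ((r/M) * M^(2*k+1)) := by
    intro k hk x hx
    have h := hA (2*k-1) (by omega) hx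
    obtain ⟨i, hi1, hi2⟩ : ∃ i, 2*k-1 = i ∧ 2*k = i + 1 := ⟨2*k-1, rfl, by omega⟩
    rw [hi1] at h
    rw [hi2]
    have e1 : (r/M)*M^(i+1) = r*M^i := by rw [pow_succ]; field_simp; try ring
    have e2 : (r/M)*M^(i+1+1) = r*M^(i+1) := by rw [pow_succ M (i+1)]; field_simp; try ring
    exact ⟨by rw [e1]; exact h.1, by rw [e2]; exact h.2⟩
  have hlip2 : ∀ k : ℕ, 1 ≤ k → ∀ x y : A (2*k-1),
      dist (f (2*k-1) x) (f (2*k-1) y) ≤ (s*M) / M^(2*k) * dist (x:X) (y:X) := by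
    intro k hk x y
    have h := hf (2*k-1) (by omega) x y
    obtain ⟨i, hi1, hi2⟩ : ∃ i, 2*k-1 = i ∧ 2*k = i + 1 := ⟨2*k-1, rfl, by omega⟩
    have e : (s*M)/M^(2*k) = s/M^(2*k-1) := by
      rw [hi1, hi2, pow_succ]; field_simp; try ring
    rw [e]
    exact h
  obtain ⟨c₂, hc₂, g₂, hg₂⟩ := hb (r/M) (s*M) M (by positivity) (by positivity) hM
    (fun k => A (2*k-1)) hsub2 (fun k => f (2*k-1)) hlip2
  have memcv1 : ∀ (k : ℕ), k % 2 = 0 → ∀ z : X, z ∈ Annulus x₀ (r*M^k) (r*M^(k+1)) →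
      z ∈ Annulus x₀ (r*M^(2*(k/2))) (r*M^(2*(k/2)+1)) := by
    intro k h z hz
    rw [(show 2*(k/2) = k by omega)]
    exact hz
  have memcv2 : ∀ (k : ℕ), ¬(k % 2 = 0) → ∀ z : X, z ∈ Annulus x₀ (r*M^k) (r*M^(k+1)) →
      z ∈ Annulus x₀ ((r/M)*M^(2*((k+1)/2))) ((r/M)*M^(2*((k+1)/2)+1)) := by
    intro k h z hz
    rw [(show 2*((k+1)/2) = k+1 by omega)]
    have e1 : (r/M)*M^(k+1) = r*M^k := by rw [pow_succ]; field_simp; try ring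
    have e2 : (r/M)*M^(k+1+1) = r*M^(k+1) := by rw [pow_succ M (k+1)]; field_simp; try ring
    exact ⟨by rw [e1]; exact hz.1, by rw [e2]; exact hz.2⟩
  refine ⟨max c₁ (c₂/M), lt_max_of_lt_left hc₁, ?_⟩
  set g : (k : ℕ) → (Annulus x₀ (r*M^k) (r*M^(k+1))) → Metric.sphere (0:EuclideanSpace ℝ (Fin (m+1))) 1 :=
    fun k x => if h : k % 2 = 0 then g₁ (k/2) ⟨x.1, memcv1 k h x.1 x.2⟩
      else g₂ ((k+1)/2) ⟨x.1, memcv2 k h x.1 x.2⟩ with hg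
  refine ⟨g, ?_⟩
  intro k hk
  by_cases h : k % 2 = 0
  · have hk2 : 1 ≤ k/2 := by omega
    have egx : ∀ x : (Annulus x₀ (r*M^k) (r*M^(k+1))),
        g k x = g₁ (k/2) ⟨x.1, memcv1 k h x.1 x.2⟩ := by
      intro x
      simp only [hg]
      rw [dif_pos h]
    have eb : c₁/M^(2*(k/2)) = c₁/M^k := by rw [(show 2*(k/2) = k by omega)]
    constructor
    · intro x y
      rw [egx x, egx y]
      refine le_trans ((hg₁ (k/2) hk2).1 ⟨x.1, memcv1 k h x.1 x.2⟩ ⟨y.1, memcv1 k h y.1 y.2⟩) ?_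
      rw [eb]
      have hnum : c₁/M^k ≤ (max c₁ (c₂/M))/M^k := by gcongr; exact le_max_left _ _
      exact mul_le_mul_of_nonneg_right hnum dist_nonneg
    · intro x hAk hAn
      rw [egx ⟨x, hAn⟩]
      have hAx' : x ∈ A (2*(k/2)) := by rw [(show 2*(k/2) = k by omega)]; exact hAk
      have gen : ∀ (i : ℕ) (hi : i = k) (p : x ∈ A i), f i ⟨x,p⟩ = f k ⟨x,hAk⟩ := by
        rintro i rfl p; rfl
      rw [(hg₁ (k/2) hk2).2 x hAx' (memcv1 k h x hAn)]
      exact gen _ (by omega) _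
  · have hj2 : 1 ≤ (k+1)/2 := by omega
    have h2j : 2*((k+1)/2) = k+1 := by omega
    have egx : ∀ x : (Annulus x₀ (r*M^k) (r*M^(k+1))),
        g k x = g₂ ((k+1)/2) ⟨x.1, memcv2 k h x.1 x.2⟩ := by
      intro x
      simp only [hg]
      rw [dif_neg h]
    have eb : c₂/M^(2*((k+1)/2)) = (c₂/M)/M^k := by
      rw [h2j, pow_succ, div_div]
      ring_nf
    constructor
    · intro x y
      rw [egx x, egx y]
      refine le_trans ((hg₂ ((k+1)/2) hj2).1 ⟨x.1, memcv2 k h x.1 x.2⟩ ⟨y.1, memcv2 k h y.1 y.2⟩) ?_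
      rw [eb]
      have hnum : (c₂/M)/M^k ≤ (max c₁ (c₂/M))/M^k := by gcongr; exact le_max_right _ _
      exact mul_le_mul_of_nonneg_right hnum dist_nonneg
    · intro x hAk hAn
      rw [egx ⟨x, hAn⟩]
      have hAx' : x ∈ A (2*((k+1)/2)-1) := by rw [(show 2*((k+1)/2)-1 = k by omega)]; exact hAk
      have gen : ∀ (i : ℕ) (hi : i = k) (p : x ∈ A i), f i ⟨x,p⟩ = f k ⟨x,hAk⟩ := by
        rintro i rfl p; rfl
      rw [(hg₂ ((k+1)/2) hj2).2 x hAx' (memcv2 k h x hAn)]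
      exact gen _ (by omega) _


end Main
end NPEaux

theorem stmt_2 {X : Type*} [MetricSpace X] (x₀ : X)
    (hdisc : ∃ ε > 0, ∀ x y : X, x ≠ y → ε ≤ dist x y) (m : ℕ) :
    ((∀ (A : Set X) (f : A → EuclideanSpace ℝ (Fin (m + 1))),
        (∀ a : A, ‖f a‖ = dist (a : X) x₀) → LipFun f →
        ∃ F : X → EuclideanSpace ℝ (Fin (m + 1)),
          (∀ a : A, F (a : X) = f a) ∧ (∀ x : X, ‖F x‖ = dist x x₀) ∧ LipFun F)
      ↔
      (∀ (r s M : ℝ), 0 < r → 0 < s → 1 < M →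
        ∀ (A : ℕ → Set X),
          (∀ k : ℕ, 1 ≤ k → A k ⊆ Annulus x₀ (r * M ^ (2 * k)) (r * M ^ (2 * k + 1))) →
          ∀ f : (k : ℕ) → (A k) → Metric.sphere (0 : EuclideanSpace ℝ (Fin (m + 1))) 1,
            (∀ k : ℕ, 1 ≤ k → ∀ x y : A k,
              dist (f k x) (f k y) ≤ s / M ^ (2 * k) * dist (x : X) (y : X)) →
          ∃ c > (0 : ℝ), ∃ g : (k : ℕ) → (Annulus x₀ (r * M ^ (2 * k)) (r * M ^ (2 * k + 1))) →
              Metric.sphere (0 : EuclideanSpace ℝ (Fin (m + 1))) 1,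
            ∀ k : ℕ, 1 ≤ k →
              (∀ x y : (Annulus x₀ (r * M ^ (2 * k)) (r * M ^ (2 * k + 1))),
                dist (g k x) (g k y) ≤ c / M ^ (2 * k) * dist (x : X) (y : X)) ∧
              (∀ (x : X) (hA : x ∈ A k)
                  (hAn : x ∈ Annulus x₀ (r * M ^ (2 * k)) (r * M ^ (2 * k + 1))),
                g k ⟨x, hAn⟩ = f k ⟨x, hA⟩)))
    ∧
    ((∀ (r s M : ℝ), 0 < r → 0 < s → 1 < M →
        ∀ (A : ℕ → Set X),
          (∀ k : ℕ, 1 ≤ k → A k ⊆ Annulus x₀ (r * M ^ (2 * k)) (r * M ^ (2 * k + 1))) →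
          ∀ f : (k : ℕ) → (A k) → Metric.sphere (0 : EuclideanSpace ℝ (Fin (m + 1))) 1,
            (∀ k : ℕ, 1 ≤ k → ∀ x y : A k,
              dist (f k x) (f k y) ≤ s / M ^ (2 * k) * dist (x : X) (y : X)) →
          ∃ c > (0 : ℝ), ∃ g : (k : ℕ) → (Annulus x₀ (r * M ^ (2 * k)) (r * M ^ (2 * k + 1))) →
              Metric.sphere (0 : EuclideanSpace ℝ (Fin (m + 1))) 1,
            ∀ k : ℕ, 1 ≤ k →
              (∀ x y : (Annulus x₀ (r * M ^ (2 * k)) (r * M ^ (2 * k + 1))),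
                dist (g k x) (g k y) ≤ c / M ^ (2 * k) * dist (x : X) (y : X)) ∧
              (∀ (x : X) (hA : x ∈ A k)
                  (hAn : x ∈ Annulus x₀ (r * M ^ (2 * k)) (r * M ^ (2 * k + 1))),
                g k ⟨x, hAn⟩ = f k ⟨x, hA⟩))
      ↔
      (∀ (r s M : ℝ), 0 < r → 0 < s → 1 < M →
        ∀ (A : ℕ → Set X),
          (∀ k : ℕ, 1 ≤ k → A k ⊆ Annulus x₀ (r * M ^ k) (r * M ^ (k + 1))) →
          ∀ f : (k : ℕ) → (A k) → Metric.sphere (0 : EuclideanSpace ℝ (Fin (m + 1))) 1,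
            (∀ k : ℕ, 1 ≤ k → ∀ x y : A k,
              dist (f k x) (f k y) ≤ s / M ^ k * dist (x : X) (y : X)) →
          ∃ c > (0 : ℝ), ∃ g : (k : ℕ) → (Annulus x₀ (r * M ^ k) (r * M ^ (k + 1))) →
              Metric.sphere (0 : EuclideanSpace ℝ (Fin (m + 1))) 1,
            ∀ k : ℕ, 1 ≤ k →
              (∀ x y : (Annulus x₀ (r * M ^ k) (r * M ^ (k + 1))),
                dist (g k x) (g k y) ≤ c / M ^ k * dist (x : X) (y : X)) ∧
              (∀ (x : X) (hA : x ∈ A k) (hAn : x ∈ Annulus x₀ (r * M ^ k) (r * M ^ (k + 1))),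
                g k ⟨x, hAn⟩ = f k ⟨x, hA⟩))) := by
  exact ⟨⟨fun h => NPEaux.lemAB x₀ m h, fun h => NPEaux.lemBA x₀ hdisc m h⟩,
    ⟨fun h => NPEaux.lemBC x₀ m h, fun h => NPEaux.lemCB x₀ m h⟩⟩
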